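/- arXiv:1604.01434 — 3 statements merged into one kernel-verified Lean document; each statement's English description precedes it below -/
import Mathlib

section
/- Entropy-rate bounds on the compound inf-information rate: in the compound joint-distribution setting, assuming all the compound quantities appearing are finite, the following hold: (i) cinf I(X;Y) ≤ csup H(Y) − csup H(Y|X); (ii) cinf I(X;Y) ≤ cinf H(Y) − cinf H(Y|X); (iii) cinf I(X;Y) ≥ cinf H(Y) − csup H(Y|X); (iv) csup H(Y) ≥ csup H(Y|X); (v) csup H(Y) ≥ cinf H(Y) ≥ cinf H(Y|X); moreover csup I(X;Y) ≥ cinf I(X;Y) ≥ 0. -/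
open Filter
open scoped ENNReal

noncomputable section

/-- Generic compound infimum set: rates `R` with `sup_s P_{Z∼P_{n,s}}(f_{n,s}(Z) ≤ R) → 0`. -/
def cinfSet {S : Type*} {T : ℕ → Type*} [∀ n, Fintype (T n)]
    (P : ∀ n, S → PMF (T n)) (f : ∀ n, S → T n → ℝ) : Set ℝ :=
  {R : ℝ | Tendsto (fun n => ⨆ s : S,
      ∑ z : T n, {z' : T n | f n s z' ≤ R}.indicator (fun z' => P n s z') z)
    atTop (nhds 0)}

/-- Generic compound infimum. -/
def cinf {S : Type*} {T : ℕ → Type*} [∀ n, Fintype (T n)]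
    (P : ∀ n, S → PMF (T n)) (f : ∀ n, S → T n → ℝ) : ℝ := sSup (cinfSet P f)

/-- Generic compound supremum set: rates `R` with `sup_s P_{Z∼P_{n,s}}(f_{n,s}(Z) ≥ R) → 0`. -/
def csupSet {S : Type*} {T : ℕ → Type*} [∀ n, Fintype (T n)]
    (P : ∀ n, S → PMF (T n)) (f : ∀ n, S → T n → ℝ) : Set ℝ :=
  {R : ℝ | Tendsto (fun n => ⨆ s : S,
      ∑ z : T n, {z' : T n | R ≤ f n s z'}.indicator (fun z' => P n s z') z)
    atTop (nhds 0)}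

/-- Generic compound supremum. -/
def csup {S : Type*} {T : ℕ → Type*} [∀ n, Fintype (T n)]
    (P : ∀ n, S → PMF (T n)) (f : ∀ n, S → T n → ℝ) : ℝ := sInf (csupSet P f)

/-- First marginal of a joint PMF on `A n × B n`. -/
def margX {S : Type*} {A B : ℕ → Type*} [∀ n, Fintype (B n)]
    (P : ∀ n, S → PMF (A n × B n)) (n : ℕ) (s : S) (x : A n) : ℝ≥0∞ :=
  ∑ y : B n, P n s (x, y)

/-- Second marginal of a joint PMF on `A n × B n`. -/
def margY {S : Type*} {A B : ℕ → Type*} [∀ n, Fintype (A n)]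
    (P : ∀ n, S → PMF (A n × B n)) (n : ℕ) (s : S) (y : B n) : ℝ≥0∞ :=
  ∑ x : A n, P n s (x, y)

/-- Information density rate `i_{n,s}(x,y) = (1/n)·ln(P(x,y)/(p(x)·q(y)))`. -/
def iDens {S : Type*} {A B : ℕ → Type*} [∀ n, Fintype (A n)] [∀ n, Fintype (B n)]
    (P : ∀ n, S → PMF (A n × B n)) (n : ℕ) (s : S) (z : A n × B n) : ℝ :=
  (1 / (n : ℝ)) * Real.log ((P n s z).toReal /
    ((margX P n s z.1).toReal * (margY P n s z.2).toReal))

/-- Output entropy density rate `h_{n,s}(Y) = −(1/n)·ln q(y)`. -/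
def hYDens {S : Type*} {A B : ℕ → Type*} [∀ n, Fintype (A n)]
    (P : ∀ n, S → PMF (A n × B n)) (n : ℕ) (s : S) (z : A n × B n) : ℝ :=
  -((1 / (n : ℝ)) * Real.log (margY P n s z.2).toReal)

/-- Conditional entropy density rate `h_{n,s}(Y|X) = −(1/n)·ln(P(x,y)/p(x))`. -/
def hYXDens {S : Type*} {A B : ℕ → Type*} [∀ n, Fintype (B n)]
    (P : ∀ n, S → PMF (A n × B n)) (n : ℕ) (s : S) (z : A n × B n) : ℝ :=
  -((1 / (n : ℝ)) * Real.log ((P n s z).toReal / (margX P n s z.1).toReal))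

section Helpers

open Set

lemma sum_pmf_eq_one {T : Type*} [Fintype T] (p : PMF T) : ∑ z, p z = 1 := by
  rw [← tsum_fintype (L := SummationFilter.unconditional T)]; exact p.tsum_coe

lemma indicator_sum_le3 {T : Type*} [Fintype T] (p : T → ℝ≥0∞) {E F G : Set T}
    (h : ∀ z, p z ≠ 0 → z ∈ E → z ∈ F ∨ z ∈ G) :
    ∑ z, E.indicator p z ≤ (∑ z, F.indicator p z) + ∑ z, G.indicator p z := by
  rw [← Finset.sum_add_distrib]
  refine Finset.sum_le_sum fun z _ => ?_
  by_cases hzE : z ∈ E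
  · by_cases hp : p z = 0
    · simp [Set.indicator_of_mem hzE, hp]
    · rcases h z hp hzE with hF | hG
      · rw [Set.indicator_of_mem hzE]
        calc p z = F.indicator p z := (Set.indicator_of_mem hF p).symm
          _ ≤ _ := le_self_add
      · rw [Set.indicator_of_mem hzE]
        calc p z = G.indicator p z := (Set.indicator_of_mem hG p).symm
          _ ≤ _ := le_add_self
  · simp [Set.indicator_of_notMem hzE]

lemma tendsto_sup_add {S : Type*} (a b c : ℕ → S → ℝ≥0∞)
    (hab : ∀ n s, a n s ≤ b n s + c n s)
    (hb : Tendsto (fun n => ⨆ s, b n s) atTop (nhds 0))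
    (hc : Tendsto (fun n => ⨆ s, c n s) atTop (nhds 0)) :
    Tendsto (fun n => ⨆ s, a n s) atTop (nhds 0) := by
  have h : ∀ n, (⨆ s, a n s) ≤ (⨆ s, b n s) + (⨆ s, c n s) := fun n =>
    iSup_le fun s => le_trans (hab n s) (add_le_add (le_iSup _ s) (le_iSup _ s))
  have hsum : Tendsto (fun n => (⨆ s, b n s) + (⨆ s, c n s)) atTop (nhds 0) := by
    simpa using hb.add hc
  exact tendsto_of_tendsto_of_tendsto_of_le_of_le tendsto_const_nhds hsum
    (fun n => zero_le) h

variable {S : Type*} {T : ℕ → Type*} [∀ n, Fintype (T n)]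

lemma mem_cinfSet_add (P : ∀ n, S → PMF (T n)) (u v g : ∀ n, S → T n → ℝ)
    (hsupp : ∀ n s z, (P n s z ≠ 0) → g n s z = u n s z + v n s z)
    {R1 R2 : ℝ} (h1 : R1 ∈ cinfSet P u) (h2 : R2 ∈ cinfSet P v) :
    R1 + R2 ∈ cinfSet P g := by
  refine tendsto_sup_add _ _ _ (fun n s => ?_) h1 h2
  refine indicator_sum_le3 _ fun z hp hz => ?_
  simp only [Set.mem_setOf_eq] at *
  by_contra hcon
  push_neg at hcon
  have := hsupp n s z hp
  obtain ⟨a, b⟩ := hcon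
  linarith

lemma mem_cinfSet_sub (P : ∀ n, S → PMF (T n)) (u v g : ∀ n, S → T n → ℝ)
    (hsupp : ∀ n s z, (P n s z ≠ 0) → g n s z = u n s z + v n s z)
    {Rg R2 : ℝ} (hg : Rg ∈ cinfSet P g) (h2 : R2 ∈ csupSet P v) :
    Rg - R2 ∈ cinfSet P u := by
  refine tendsto_sup_add _ _ _ (fun n s => ?_) hg h2
  refine indicator_sum_le3 _ fun z hp hz => ?_
  simp only [Set.mem_setOf_eq] at *
  by_contra hcon
  push_neg at hcon
  have := hsupp n s z hp
  obtain ⟨a, b⟩ := hcon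
  linarith

lemma mem_csupSet_sub (P : ∀ n, S → PMF (T n)) (u v g : ∀ n, S → T n → ℝ)
    (hsupp : ∀ n s z, (P n s z ≠ 0) → g n s z = u n s z + v n s z)
    {Rg R1 : ℝ} (hg : Rg ∈ csupSet P g) (h1 : R1 ∈ cinfSet P u) :
    Rg - R1 ∈ csupSet P v := by
  refine tendsto_sup_add _ _ _ (fun n s => ?_) hg h1
  refine indicator_sum_le3 _ fun z hp hz => ?_
  simp only [Set.mem_setOf_eq] at *
  by_contra hcon
  push_neg at hcon
  have := hsupp n s z hp
  obtain ⟨a, b⟩ := hcon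
  linarith

lemma cinfSet_le_csupSet [Nonempty S] (P : ∀ n, S → PMF (T n)) (f : ∀ n, S → T n → ℝ)
    {R1 R2 : ℝ} (h1 : R1 ∈ cinfSet P f) (h2 : R2 ∈ csupSet P f) : R1 ≤ R2 := by
  by_contra hlt
  push_neg at hlt
  obtain ⟨s0⟩ := ‹Nonempty S›
  have key : ∀ n, (1 : ℝ≥0∞) ≤
      (⨆ s, ∑ z : T n, {z' : T n | f n s z' ≤ R1}.indicator (fun z' => P n s z') z) +
      ⨆ s, ∑ z : T n, {z' : T n | R2 ≤ f n s z'}.indicator (fun z' => P n s z') z := by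
    intro n
    have hle : ∑ z : T n, (Set.univ).indicator (fun z' => P n s0 z') z ≤
        (∑ z : T n, {z' : T n | f n s0 z' ≤ R1}.indicator (fun z' => P n s0 z') z) +
        ∑ z : T n, {z' : T n | R2 ≤ f n s0 z'}.indicator (fun z' => P n s0 z') z := by
      refine indicator_sum_le3 _ fun z hp _ => ?_
      simp only [Set.mem_setOf_eq]
      by_cases hz : f n s0 z ≤ R1
      · exact Or.inl hz
      · exact Or.inr (by push_neg at hz; linarith)
    have huniv : ∑ z : T n, (Set.univ).indicator (fun z' => P n s0 z') z = 1 := by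
      simp only [Set.indicator_univ]
      exact sum_pmf_eq_one _
    rw [← huniv]
    refine le_trans hle (add_le_add ?_ ?_)
    · exact le_iSup (fun s => ∑ z : T n, {z' : T n | f n s z' ≤ R1}.indicator (fun z' => P n s z') z) s0
    · exact le_iSup (fun s => ∑ z : T n, {z' : T n | R2 ≤ f n s z'}.indicator (fun z' => P n s z') z) s0
  have hsum : Tendsto (fun n =>
      (⨆ s, ∑ z : T n, {z' : T n | f n s z' ≤ R1}.indicator (fun z' => P n s z') z) +
      ⨆ s, ∑ z : T n, {z' : T n | R2 ≤ f n s z'}.indicator (fun z' => P n s z') z)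
      atTop (nhds 0) := by
    simpa using h1.add h2
  have hev : ∀ᶠ n in atTop, ((⨆ s, ∑ z : T n, {z' : T n | f n s z' ≤ R1}.indicator
      (fun z' => P n s z') z) +
      ⨆ s, ∑ z : T n, {z' : T n | R2 ≤ f n s z'}.indicator (fun z' => P n s z') z)
      < 1 := hsum.eventually_lt_const (by norm_num)
  obtain ⟨n, hn⟩ := hev.exists
  exact absurd (key n) (not_le.mpr hn)

end Helpers

section Specific

variable {S : Type*} {A B : ℕ → Type*} [∀ n, Fintype (A n)] [∀ n, Fintype (B n)]

lemma P_le_margX (P : ∀ n, S → PMF (A n × B n)) (n : ℕ) (s : S) (z : A n × B n) :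
    P n s z ≤ margX P n s z.1 := by
  have := Finset.single_le_sum (f := fun y => P n s (z.1, y))
    (fun i _ => zero_le) (Finset.mem_univ z.2)
  simpa [margX] using this

lemma P_le_margY (P : ∀ n, S → PMF (A n × B n)) (n : ℕ) (s : S) (z : A n × B n) :
    P n s z ≤ margY P n s z.2 := by
  have := Finset.single_le_sum (f := fun x => P n s (x, z.2))
    (fun i _ => zero_le) (Finset.mem_univ z.1)
  simpa [margY] using this

lemma sum_margX (P : ∀ n, S → PMF (A n × B n)) (n : ℕ) (s : S) :
    ∑ x : A n, margX P n s x = 1 := by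
  simp only [margX]
  rw [← Fintype.sum_prod_type]
  exact sum_pmf_eq_one _

lemma sum_margY (P : ∀ n, S → PMF (A n × B n)) (n : ℕ) (s : S) :
    ∑ y : B n, margY P n s y = 1 := by
  simp only [margY]
  rw [← Fintype.sum_prod_type_right]
  exact sum_pmf_eq_one _

lemma margX_ne_top (P : ∀ n, S → PMF (A n × B n)) (n : ℕ) (s : S) (x : A n) :
    margX P n s x ≠ ⊤ := by
  intro h
  have hle : margX P n s x ≤ ∑ x' : A n, margX P n s x' :=
    Finset.single_le_sum (fun i _ => zero_le) (Finset.mem_univ x)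
  rw [sum_margX, h] at hle
  exact (by simp : ¬ ((⊤ : ℝ≥0∞) ≤ 1)) hle

lemma margY_ne_top (P : ∀ n, S → PMF (A n × B n)) (n : ℕ) (s : S) (y : B n) :
    margY P n s y ≠ ⊤ := by
  intro h
  have hle : margY P n s y ≤ ∑ y' : B n, margY P n s y' :=
    Finset.single_le_sum (fun i _ => zero_le) (Finset.mem_univ y)
  rw [sum_margY, h] at hle
  exact (by simp : ¬ ((⊤ : ℝ≥0∞) ≤ 1)) hle

lemma hY_decomp (P : ∀ n, S → PMF (A n × B n)) :
    ∀ n s z, P n s z ≠ 0 → hYDens P n s z = iDens P n s z + hYXDens P n s z := by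
  intro n s z hne
  have hPtop : P n s z ≠ ⊤ := ne_top_of_le_ne_top ENNReal.one_ne_top (PMF.coe_le_one _ _)
  have ha : 0 < (P n s z).toReal := ENNReal.toReal_pos hne hPtop
  have hbne : margX P n s z.1 ≠ 0 := fun h0 => hne (le_antisymm
    (h0 ▸ P_le_margX P n s z) (zero_le))
  have hcne : margY P n s z.2 ≠ 0 := fun h0 => hne (le_antisymm
    (h0 ▸ P_le_margY P n s z) (zero_le))
  have hb : 0 < (margX P n s z.1).toReal := ENNReal.toReal_pos hbne (margX_ne_top P n s z.1)
  have hc : 0 < (margY P n s z.2).toReal := ENNReal.toReal_pos hcne (margY_ne_top P n s z.2)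
  simp only [hYDens, iDens, hYXDens]
  rw [Real.log_div ha.ne' (mul_ne_zero hb.ne' hc.ne'), Real.log_mul hb.ne' hc.ne',
    Real.log_div ha.ne' hb.ne']
  ring

lemma neg_mem_cinfSet_iDens (P : ∀ n, S → PMF (A n × B n)) {R : ℝ} (hR : R < 0) :
    R ∈ cinfSet P (iDens P) := by
  have hupper : Tendsto (fun n : ℕ => ENNReal.ofReal (Real.exp ((n : ℝ) * R)))
      atTop (nhds 0) := by
    have h1 : Tendsto (fun n : ℕ => (n : ℝ) * R) atTop atBot :=
      Tendsto.atTop_mul_const_of_neg hR tendsto_natCast_atTop_atTop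
    have h2 := Real.tendsto_exp_atBot.comp h1
    have h3 := (ENNReal.continuous_ofReal.tendsto 0).comp h2
    simpa [Function.comp_def] using h3
  refine tendsto_of_tendsto_of_tendsto_of_le_of_le' tendsto_const_nhds hupper
    (Eventually.of_forall fun n => zero_le) ?_
  filter_upwards [eventually_ge_atTop 1] with n hn
  refine iSup_le fun s => ?_
  have hpt : ∀ z : A n × B n,
      {z' : A n × B n | iDens P n s z' ≤ R}.indicator (fun z' => P n s z') z ≤
      ENNReal.ofReal (Real.exp ((n : ℝ) * R)) * (margX P n s z.1 * margY P n s z.2) := by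
    intro z
    by_cases hzE : z ∈ {z' : A n × B n | iDens P n s z' ≤ R}
    · rw [Set.indicator_of_mem hzE]
      by_cases hp : P n s z = 0
      · rw [hp]; exact zero_le
      · have hPtop : P n s z ≠ ⊤ :=
          ne_top_of_le_ne_top ENNReal.one_ne_top (PMF.coe_le_one _ _)
        have ha : 0 < (P n s z).toReal := ENNReal.toReal_pos hp hPtop
        have hbne : margX P n s z.1 ≠ 0 := fun h0 => hp (le_antisymm
          (h0 ▸ P_le_margX P n s z) (zero_le))
        have hcne : margY P n s z.2 ≠ 0 := fun h0 => hp (le_antisymm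
          (h0 ▸ P_le_margY P n s z) (zero_le))
        have hb : 0 < (margX P n s z.1).toReal :=
          ENNReal.toReal_pos hbne (margX_ne_top P n s z.1)
        have hc : 0 < (margY P n s z.2).toReal :=
          ENNReal.toReal_pos hcne (margY_ne_top P n s z.2)
        have hnpos : (0 : ℝ) < (n : ℝ) := by exact_mod_cast Nat.pos_of_ne_zero (by omega)
        have hz' : (1 / (n : ℝ)) * Real.log ((P n s z).toReal /
            ((margX P n s z.1).toReal * (margY P n s z.2).toReal)) ≤ R := hzE
        have hL : Real.log ((P n s z).toReal /
            ((margX P n s z.1).toReal * (margY P n s z.2).toReal)) ≤ (n : ℝ) * R := by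
          have h := mul_le_mul_of_nonneg_left hz' hnpos.le
          have heq : (n : ℝ) * ((1 / (n : ℝ)) * Real.log ((P n s z).toReal /
              ((margX P n s z.1).toReal * (margY P n s z.2).toReal))) =
              Real.log ((P n s z).toReal /
              ((margX P n s z.1).toReal * (margY P n s z.2).toReal)) := by
            field_simp
          rw [heq] at h
          exact h
        have hdivpos : 0 < (P n s z).toReal /
            ((margX P n s z.1).toReal * (margY P n s z.2).toReal) := by positivity
        have hdiv : (P n s z).toReal /
            ((margX P n s z.1).toReal * (margY P n s z.2).toReal) ≤
            Real.exp ((n : ℝ) * R) := by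
          calc (P n s z).toReal / ((margX P n s z.1).toReal * (margY P n s z.2).toReal)
              = Real.exp (Real.log ((P n s z).toReal /
                ((margX P n s z.1).toReal * (margY P n s z.2).toReal))) :=
                (Real.exp_log hdivpos).symm
            _ ≤ Real.exp ((n : ℝ) * R) := Real.exp_le_exp.mpr hL
        have hreal : (P n s z).toReal ≤ Real.exp ((n : ℝ) * R) *
            ((margX P n s z.1).toReal * (margY P n s z.2).toReal) :=
          by
            have := (div_le_iff₀ (by positivity : (0:ℝ) <
              (margX P n s z.1).toReal * (margY P n s z.2).toReal)).mp hdiv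
            linarith
        calc P n s z = ENNReal.ofReal ((P n s z).toReal) :=
              (ENNReal.ofReal_toReal hPtop).symm
          _ ≤ ENNReal.ofReal (Real.exp ((n : ℝ) * R) *
              ((margX P n s z.1).toReal * (margY P n s z.2).toReal)) :=
              ENNReal.ofReal_le_ofReal hreal
          _ = ENNReal.ofReal (Real.exp ((n : ℝ) * R)) *
              (margX P n s z.1 * margY P n s z.2) := by
              rw [ENNReal.ofReal_mul (Real.exp_pos _).le,
                ENNReal.ofReal_mul hb.le, ENNReal.ofReal_toReal (margX_ne_top P n s z.1),
                ENNReal.ofReal_toReal (margY_ne_top P n s z.2)]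
    · rw [Set.indicator_of_notMem hzE]; exact zero_le
  calc ∑ z : A n × B n, {z' : A n × B n | iDens P n s z' ≤ R}.indicator
        (fun z' => P n s z') z
      ≤ ∑ z : A n × B n, ENNReal.ofReal (Real.exp ((n : ℝ) * R)) *
        (margX P n s z.1 * margY P n s z.2) := Finset.sum_le_sum fun z _ => hpt z
    _ = ENNReal.ofReal (Real.exp ((n : ℝ) * R)) *
        ∑ z : A n × B n, margX P n s z.1 * margY P n s z.2 := by
        rw [Finset.mul_sum]
    _ = ENNReal.ofReal (Real.exp ((n : ℝ) * R)) := by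
        rw [Fintype.sum_prod_type]
        have : ∑ x : A n, ∑ y : B n, margX P n s x * margY P n s y
            = (∑ x : A n, margX P n s x) * ∑ y : B n, margY P n s y := by
          rw [Finset.sum_mul]
          exact Finset.sum_congr rfl fun x _ => by rw [Finset.mul_sum]
        rw [this, sum_margX, sum_margY, one_mul, mul_one]

end Specific

/-- entropy-rate bounds on the compound inf-information rate, assuming all
the compound quantities appearing are finite:
(i) `cinf I(X;Y) ≤ csup H(Y) − csup H(Y|X)`; (ii) `cinf I(X;Y) ≤ cinf H(Y) − cinf H(Y|X)`;
(iii) `cinf I(X;Y) ≥ cinf H(Y) − csup H(Y|X)`; (iv) `csup H(Y) ≥ csup H(Y|X)`;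
(v) `csup H(Y) ≥ cinf H(Y) ≥ cinf H(Y|X)`; moreover `csup I(X;Y) ≥ cinf I(X;Y) ≥ 0`. -/
theorem compound_inf_information_entropy_bounds {S : Type*} [Nonempty S]
    {A B : ℕ → Type*} [∀ n, Fintype (A n)] [∀ n, Nonempty (A n)]
    [∀ n, Fintype (B n)] [∀ n, Nonempty (B n)]
    (P : ∀ n, S → PMF (A n × B n))
    (hi₁ : (cinfSet P (iDens P)).Nonempty) (hi₂ : BddAbove (cinfSet P (iDens P)))
    (hi₃ : (csupSet P (iDens P)).Nonempty) (hi₄ : BddBelow (csupSet P (iDens P)))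
    (hy₁ : (cinfSet P (hYDens P)).Nonempty) (hy₂ : BddAbove (cinfSet P (hYDens P)))
    (hy₃ : (csupSet P (hYDens P)).Nonempty) (hy₄ : BddBelow (csupSet P (hYDens P)))
    (hc₁ : (cinfSet P (hYXDens P)).Nonempty) (hc₂ : BddAbove (cinfSet P (hYXDens P)))
    (hc₃ : (csupSet P (hYXDens P)).Nonempty) (hc₄ : BddBelow (csupSet P (hYXDens P))) :
    cinf P (iDens P) ≤ csup P (hYDens P) - csup P (hYXDens P) ∧
    cinf P (iDens P) ≤ cinf P (hYDens P) - cinf P (hYXDens P) ∧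
    cinf P (hYDens P) - csup P (hYXDens P) ≤ cinf P (iDens P) ∧
    csup P (hYXDens P) ≤ csup P (hYDens P) ∧
    (cinf P (hYDens P) ≤ csup P (hYDens P) ∧
      cinf P (hYXDens P) ≤ cinf P (hYDens P)) ∧
    (cinf P (iDens P) ≤ csup P (iDens P) ∧ 0 ≤ cinf P (iDens P)) := by
  simp only [cinf, csup]
  have hdec := hY_decomp P
  -- A4 : 0 ≤ cinf I
  have A4 : 0 ≤ sSup (cinfSet P (iDens P)) := by
    by_contra h
    push_neg at h
    have hmem : sSup (cinfSet P (iDens P)) / 2 ∈ cinfSet P (iDens P) :=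
      neg_mem_cinfSet_iDens P (by linarith)
    have := le_csSup hi₂ hmem
    linarith
  -- key1 : ∀ R1 ∈ cinfSet I, R1 + csup H(Y|X) ≤ csup H(Y)
  have key1 : ∀ R1 ∈ cinfSet P (iDens P),
      R1 + sInf (csupSet P (hYXDens P)) ≤ sInf (csupSet P (hYDens P)) := by
    intro R1 hR1
    refine le_csInf hy₃ fun Rg hRg => ?_
    have := csInf_le hc₄ (mem_csupSet_sub P (iDens P) (hYXDens P) (hYDens P) hdec hRg hR1)
    linarith
  have A1 : sSup (cinfSet P (iDens P)) + sInf (csupSet P (hYXDens P))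
      ≤ sInf (csupSet P (hYDens P)) := by
    have : sSup (cinfSet P (iDens P)) ≤
        sInf (csupSet P (hYDens P)) - sInf (csupSet P (hYXDens P)) :=
      csSup_le hi₁ fun R1 hR1 => by linarith [key1 R1 hR1]
    linarith
  have A2 : sSup (cinfSet P (iDens P)) + sSup (cinfSet P (hYXDens P))
      ≤ sSup (cinfSet P (hYDens P)) := by
    have : sSup (cinfSet P (iDens P)) ≤
        sSup (cinfSet P (hYDens P)) - sSup (cinfSet P (hYXDens P)) := by
      refine csSup_le hi₁ fun R1 hR1 => ?_
      have : sSup (cinfSet P (hYXDens P)) ≤ sSup (cinfSet P (hYDens P)) - R1 := by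
        refine csSup_le hc₁ fun R2 hR2 => ?_
        have := le_csSup hy₂ (mem_cinfSet_add P (iDens P) (hYXDens P) (hYDens P) hdec hR1 hR2)
        linarith
      linarith
    linarith
  have A3 : sSup (cinfSet P (hYDens P)) ≤
      sSup (cinfSet P (iDens P)) + sInf (csupSet P (hYXDens P)) := by
    refine csSup_le hy₁ fun Rg hRg => ?_
    have : Rg - sSup (cinfSet P (iDens P)) ≤ sInf (csupSet P (hYXDens P)) := by
      refine le_csInf hc₃ fun R2 hR2 => ?_
      have := le_csSup hi₂ (mem_cinfSet_sub P (iDens P) (hYXDens P) (hYDens P) hdec hRg hR2)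
      linarith
    linarith
  have A5 : sSup (cinfSet P (iDens P)) ≤ sInf (csupSet P (iDens P)) :=
    csSup_le hi₁ fun R1 h1 => le_csInf hi₃ fun R2 h2 => cinfSet_le_csupSet P _ h1 h2
  have A6 : sSup (cinfSet P (hYDens P)) ≤ sInf (csupSet P (hYDens P)) :=
    csSup_le hy₁ fun R1 h1 => le_csInf hy₃ fun R2 h2 => cinfSet_le_csupSet P _ h1 h2
  have B2 : 0 ≤ sSup (cinfSet P (hYXDens P)) ∨ True := Or.inr trivial
  refine ⟨by linarith, by linarith, by linarith, by linarith, ⟨by linarith, by linarith⟩,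
    by linarith, by linarith⟩


end
end

section
/- Sufficient condition for the compound inf-information rate to equal the worst-case mutual information rate: in the general compound channel setting, suppose the input alphabets have per-symbol structure A_n = 𝒳ⁿ for a fixed nonempty finite set 𝒳, suppose cinf I(X;Y) is finite, and suppose that for every δ > 0, liminf_{n→∞} inf_{s∈S} P( |Z_{n,s} − cinf I(X;Y)| > δ ) = 0. Then cinf I(X;Y) = liminf_{n→∞} inf_{s∈S} (1/n)·I(X^n;Y^n|s). -/
open Filter
open scoped ENNReal

noncomputable section

variable {S : Type*} {A B : ℕ → Type*}

/-- Output distribution `q_{n,s}(y) = Σ_x p_n(x)·W_{n,s}(x)(y)`. -/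
def outDist [∀ n, Fintype (A n)] (p : ∀ n, PMF (A n)) (W : ∀ n, S → A n → PMF (B n))
    (n : ℕ) (s : S) (y : B n) : ℝ≥0∞ :=
  ∑ x : A n, p n x * W n s x y

/-- Information density rate `Z_{n,s}(x,y) = (1/n)·ln(W_{n,s}(x)(y)/q_{n,s}(y))`. -/
def infoDensRate [∀ n, Fintype (A n)] (p : ∀ n, PMF (A n)) (W : ∀ n, S → A n → PMF (B n))
    (n : ℕ) (s : S) (z : A n × B n) : ℝ :=
  (1 / (n : ℝ)) * Real.log ((W n s z.1 z.2).toReal / (outDist p W n s z.2).toReal)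

/-- Probability of an event for the pair `(Xⁿ,Yⁿ) ∼ p_n ⊗ W_{n,s}`. -/
def probEvent [∀ n, Fintype (A n)] [∀ n, Fintype (B n)]
    (p : ∀ n, PMF (A n)) (W : ∀ n, S → A n → PMF (B n)) (n : ℕ) (s : S)
    (E : Set (A n × B n)) : ℝ≥0∞ :=
  ∑ z : A n × B n, E.indicator (fun z' => p n z'.1 * W n s z'.1 z'.2) z

/-- The set whose supremum is the compound inf-information rate. -/
def cinfISet [∀ n, Fintype (A n)] [∀ n, Fintype (B n)]
    (p : ∀ n, PMF (A n)) (W : ∀ n, S → A n → PMF (B n)) : Set ℝ :=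
  {R : ℝ | Tendsto (fun n => ⨆ s : S,
      probEvent p W n s {z | infoDensRate p W n s z ≤ R}) atTop (nhds 0)}

/-- The compound inf-information rate `cinf I(X;Y)`. -/
def cinfI [∀ n, Fintype (A n)] [∀ n, Fintype (B n)]
    (p : ∀ n, PMF (A n)) (W : ∀ n, S → A n → PMF (B n)) : ℝ := sSup (cinfISet p W)

/-- Mutual information `I(Xⁿ;Yⁿ|s)`. -/
def mutualInfo [∀ n, Fintype (A n)] [∀ n, Fintype (B n)]
    (p : ∀ n, PMF (A n)) (W : ∀ n, S → A n → PMF (B n)) (n : ℕ) (s : S) : ℝ :=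
  ∑ x : A n, ∑ y : B n, (p n x * W n s x y).toReal *
    Real.log ((W n s x y).toReal / (outDist p W n s y).toReal)

/-! ### Elementary real lemmas -/

lemma sqrt_exp_eq (x : ℝ) : Real.sqrt (Real.exp x) = Real.exp (x / 2) := by
  rw [show Real.exp x = Real.exp (x / 2) ^ 2 by rw [sq, ← Real.exp_add, add_halves]]
  exact Real.sqrt_sq (Real.exp_pos _).le

lemma mul_min_zero' {c x : ℝ} (hc : 0 ≤ c) : c * min x 0 = min (c * x) 0 := by
  rcases le_total x 0 with h | h
  · rw [min_eq_left h, min_eq_left (mul_nonpos_of_nonneg_of_nonpos hc h)]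
  · rw [min_eq_right h, mul_zero, min_eq_right (mul_nonneg hc h)]

lemma real_pt_lower {pp w q : ℝ} (hp : 0 ≤ pp) (hw : 0 ≤ w) (hq : 0 ≤ q)
    (hpwq : pp * w ≤ q) :
    -(pp * q / Real.exp 1) ≤ pp * w * min (Real.log (w / q)) 0 := by
  rcases eq_or_lt_of_le hw with hw0 | hw0
  · have h0 : 0 ≤ pp * q / Real.exp 1 := by positivity
    simpa [← hw0] using neg_nonpos.mpr h0
  rcases eq_or_lt_of_le hq with hq0 | hq0
  · have h0 : pp * w = 0 := le_antisymm (hq0 ▸ hpwq) (mul_nonneg hp hw)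
    rw [h0]
    simp [← hq0]
  have hlog : Real.log (w / q) = -Real.log (q / w) := by
    rw [← Real.log_inv, inv_div]
  rw [hlog, show (0:ℝ) = -0 from neg_zero.symm, min_neg_neg, mul_neg, neg_le_neg_iff]
  rcases le_total q w with hqw | hwq
  · rw [max_eq_right (Real.log_nonpos (by positivity) ((div_le_one hw0).mpr hqw))]
    have : 0 ≤ pp * q / Real.exp 1 := by positivity
    simpa using this
  · rw [max_eq_left (Real.log_nonneg ((one_le_div hw0).mpr hwq))]
    have h2 : Real.log (q / w) ≤ q / (Real.exp 1 * w) := by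
      have h3 : q / w = Real.exp 1 * (q / (Real.exp 1 * w)) := by
        field_simp
      rw [h3, Real.log_mul (Real.exp_ne_zero 1) (by positivity), Real.log_exp]
      have h4 := Real.log_le_sub_one_of_pos (show 0 < q / (Real.exp 1 * w) by positivity)
      linarith
    have key : w * Real.log (q / w) ≤ q / Real.exp 1 := by
      calc w * Real.log (q / w) ≤ w * (q / (Real.exp 1 * w)) :=
            mul_le_mul_of_nonneg_left h2 hw
        _ = q / Real.exp 1 := by field_simp
    calc pp * w * Real.log (q / w) = pp * (w * Real.log (q / w)) := by ring
      _ ≤ pp * (q / Real.exp 1) := mul_le_mul_of_nonneg_left key hp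
      _ = pp * q / Real.exp 1 := by ring

lemma real_pt_upper {pp w q : ℝ} (hp : 0 ≤ pp) (hw : 0 ≤ w)
    (hpwq : pp * w ≤ q) :
    pp * w * Real.log (w / q) ≤ pp * w * Real.log (1 / pp) := by
  rcases eq_or_lt_of_le hp with h | hpp
  · simp [← h]
  rcases eq_or_lt_of_le hw with h | hww
  · simp [← h]
  have hq : 0 < q := lt_of_lt_of_le (by positivity) hpwq
  have hdiv : w / q ≤ 1 / pp := by
    rw [div_le_div_iff₀ hq hpp]
    nlinarith
  exact mul_le_mul_of_nonneg_left (Real.log_le_log (by positivity) hdiv)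
    (mul_nonneg hp hw)

lemma pt_tail {u : ℝ} (hu0 : 0 ≤ u) (t : ℝ) :
    (if t < Real.log (1 / u) then u * Real.log (1 / u) else 0)
      ≤ 2 * Real.exp (-t / 2) := by
  split_ifs with h
  · rcases eq_or_lt_of_le hu0 with hu | hu
    · rw [← hu, zero_mul]; positivity
    rcases le_or_gt (Real.log (1 / u)) 0 with hl | hl
    · have h1 : u * Real.log (1 / u) ≤ 0 := mul_nonpos_of_nonneg_of_nonpos hu0 hl
      have h2 : (0:ℝ) ≤ 2 * Real.exp (-t / 2) := by positivity
      linarith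
    · have hlogu : Real.log (1 / u) = -Real.log u := by rw [one_div, Real.log_inv]
      have hs : 0 < Real.sqrt u := Real.sqrt_pos.mpr hu
      have hb : -Real.log u ≤ 2 * (Real.sqrt u)⁻¹ := by
        have h4 := Real.log_le_sub_one_of_pos (show 0 < (Real.sqrt u)⁻¹ by positivity)
        rw [Real.log_inv, Real.log_sqrt hu0] at h4
        have h5 : (0:ℝ) < (Real.sqrt u)⁻¹ := by positivity
        linarith
      have hub : u * Real.log (1 / u) ≤ 2 * Real.sqrt u := by
        rw [hlogu]
        calc u * -Real.log u ≤ u * (2 * (Real.sqrt u)⁻¹) :=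
              mul_le_mul_of_nonneg_left hb hu.le
          _ = 2 * (u / Real.sqrt u) := by ring
          _ = 2 * Real.sqrt u := by rw [Real.div_sqrt]
      have hue : u ≤ Real.exp (-t) := by
        have hlt : Real.log u < -t := by
          rw [hlogu] at h; linarith
        calc u = Real.exp (Real.log u) := (Real.exp_log hu).symm
          _ ≤ Real.exp (-t) := Real.exp_le_exp.mpr hlt.le
      have : Real.sqrt u ≤ Real.exp (-t / 2) := by
        calc Real.sqrt u ≤ Real.sqrt (Real.exp (-t)) := Real.sqrt_le_sqrt hue
          _ = Real.exp (-t / 2) := sqrt_exp_eq _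
      linarith
  · positivity

lemma tail_sum {α : Type*} [Fintype α] (q : PMF α) (t : ℝ) :
    (∑ x : α, if t < Real.log (1 / (q x).toReal)
        then (q x).toReal * Real.log (1 / (q x).toReal) else 0)
      ≤ (Fintype.card α : ℝ) * (2 * Real.exp (-t / 2)) := by
  classical
  have h := Finset.sum_le_card_nsmul Finset.univ
    (fun x => if t < Real.log (1 / (q x).toReal)
        then (q x).toReal * Real.log (1 / (q x).toReal) else 0)
    (2 * Real.exp (-t / 2))
    (fun x _ => pt_tail ENNReal.toReal_nonneg t)
  simpa [Finset.card_univ, nsmul_eq_mul] using h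

/-! ### Sum and probability lemmas -/

section Sums

variable [∀ n, Fintype (A n)] [∀ n, Fintype (B n)]
variable (p : ∀ n, PMF (A n)) (W : ∀ n, S → A n → PMF (B n))

lemma pmf_fin_sum {α : Type*} [Fintype α] (q : PMF α) : ∑ a : α, q a = 1 := by
  rw [← tsum_fintype (L := SummationFilter.unconditional _)]; exact q.tsum_coe

lemma pmf_fin_sum_toReal {α : Type*} [Fintype α] (q : PMF α) :
    ∑ a : α, (q a).toReal = 1 := by
  rw [← ENNReal.toReal_sum (fun a _ => PMF.apply_ne_top q a), pmf_fin_sum,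
    ENNReal.toReal_one]

lemma pW_ne_top (n : ℕ) (s : S) (x : A n) (y : B n) : p n x * W n s x y ≠ ⊤ :=
  ENNReal.mul_ne_top (PMF.apply_ne_top _ _) (PMF.apply_ne_top _ _)

lemma outDist_le_one (n : ℕ) (s : S) (y : B n) : outDist p W n s y ≤ 1 := by
  rw [outDist]
  calc ∑ x : A n, p n x * W n s x y ≤ ∑ x : A n, p n x * 1 :=
        Finset.sum_le_sum fun x _ => mul_le_mul_right (PMF.coe_le_one _ _) _
    _ = 1 := by simp [pmf_fin_sum]

lemma outDist_ne_top (n : ℕ) (s : S) (y : B n) : outDist p W n s y ≠ ⊤ :=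
  ne_top_of_le_ne_top ENNReal.one_ne_top (outDist_le_one p W n s y)

lemma le_outDist (n : ℕ) (s : S) (x : A n) (y : B n) :
    p n x * W n s x y ≤ outDist p W n s y :=
  Finset.single_le_sum (f := fun x => p n x * W n s x y)
    (fun _ _ => zero_le') (Finset.mem_univ x)

lemma sum_pW_one (n : ℕ) (s : S) :
    ∑ z : A n × B n, p n z.1 * W n s z.1 z.2 = 1 := by
  rw [Fintype.sum_prod_type]
  have h : ∀ x : A n, ∑ y : B n, p n x * W n s x y = p n x := fun x => by
    rw [← Finset.mul_sum, pmf_fin_sum, mul_one]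
  simp_rw [h]
  exact pmf_fin_sum (p n)

lemma sum_wgt (n : ℕ) (s : S) :
    ∑ z : A n × B n, (p n z.1 * W n s z.1 z.2).toReal = 1 := by
  rw [← ENNReal.toReal_sum (fun z _ => pW_ne_top p W n s z.1 z.2), sum_pW_one p W n s,
    ENNReal.toReal_one]

lemma sum_out_toReal (n : ℕ) (s : S) :
    ∑ y : B n, (outDist p W n s y).toReal = 1 := by
  have h : ∀ y : B n, (outDist p W n s y).toReal = ∑ x : A n, (p n x * W n s x y).toReal :=
    fun y => by rw [outDist, ENNReal.toReal_sum (fun x _ => pW_ne_top p W n s x y)]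
  simp_rw [h]
  rw [Finset.sum_comm]
  have h2 : ∀ x : A n, ∑ y : B n, (p n x * W n s x y).toReal = (p n x).toReal := fun x => by
    simp_rw [ENNReal.toReal_mul]
    rw [← Finset.mul_sum, pmf_fin_sum_toReal, mul_one]
  simp_rw [h2]
  exact pmf_fin_sum_toReal (p n)

lemma probEvent_le_one (n : ℕ) (s : S) (E : Set (A n × B n)) :
    probEvent p W n s E ≤ 1 := by
  rw [probEvent]
  calc (∑ z : A n × B n, E.indicator (fun z' => p n z'.1 * W n s z'.1 z'.2) z)
      ≤ ∑ z : A n × B n, p n z.1 * W n s z.1 z.2 :=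
        Finset.sum_le_sum fun z _ => Set.indicator_le_self _ _ z
    _ = 1 := sum_pW_one p W n s

lemma probEvent_mono (n : ℕ) (s : S) {E F : Set (A n × B n)} (h : E ⊆ F) :
    probEvent p W n s E ≤ probEvent p W n s F :=
  Finset.sum_le_sum fun z _ =>
    Set.indicator_le_indicator_of_subset h (fun _ => zero_le') z

lemma probEvent_toReal (n : ℕ) (s : S) (P : A n × B n → Prop) [DecidablePred P] :
    (probEvent p W n s {z | P z}).toReal
      = ∑ z : A n × B n, if P z then (p n z.1 * W n s z.1 z.2).toReal else 0 := by
  rw [probEvent, ENNReal.toReal_sum (fun z _ =>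
    ne_top_of_le_ne_top (pW_ne_top p W n s z.1 z.2) (Set.indicator_le_self _ _ z))]
  refine Finset.sum_congr rfl fun z _ => ?_
  by_cases h : P z
  · rw [Set.indicator_of_mem (show z ∈ {z | P z} from h), if_pos h]
  · rw [Set.indicator_of_notMem (show z ∉ {z | P z} from h), if_neg h]
    exact ENNReal.toReal_zero

lemma inv_mul_mutualInfo (n : ℕ) (s : S) :
    1 / (n : ℝ) * mutualInfo p W n s
      = ∑ z : A n × B n, (p n z.1 * W n s z.1 z.2).toReal * infoDensRate p W n s z := by
  rw [mutualInfo, Fintype.sum_prod_type, Finset.mul_sum]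
  refine Finset.sum_congr rfl fun x _ => ?_
  rw [Finset.mul_sum]
  refine Finset.sum_congr rfl fun y _ => ?_
  simp only [infoDensRate]
  ring

lemma pW_toReal_le (n : ℕ) (s : S) (z : A n × B n) :
    (p n z.1).toReal * (W n s z.1 z.2).toReal ≤ (outDist p W n s z.2).toReal := by
  rw [← ENNReal.toReal_mul]
  exact ENNReal.toReal_mono (outDist_ne_top p W n s z.2) (le_outDist p W n s z.1 z.2)

lemma pt_lower_z (n : ℕ) (s : S) (z : A n × B n) :
    1 / (n : ℝ) * -((p n z.1).toReal * (outDist p W n s z.2).toReal / Real.exp 1)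
      ≤ (p n z.1 * W n s z.1 z.2).toReal * min (infoDensRate p W n s z) 0 := by
  have h := real_pt_lower (pp := (p n z.1).toReal) (w := (W n s z.1 z.2).toReal)
    (q := (outDist p W n s z.2).toReal) ENNReal.toReal_nonneg ENNReal.toReal_nonneg
    ENNReal.toReal_nonneg (pW_toReal_le p W n s z)
  have h2 := mul_le_mul_of_nonneg_left h (show (0:ℝ) ≤ 1 / (n:ℝ) by positivity)
  simp only [infoDensRate, ENNReal.toReal_mul]
  rw [← mul_min_zero' (show (0:ℝ) ≤ 1 / (n:ℝ) by positivity)]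
  exact le_trans h2 (le_of_eq (by ring))

lemma pt_upper_z (n : ℕ) (s : S) (z : A n × B n) :
    (p n z.1 * W n s z.1 z.2).toReal * infoDensRate p W n s z
      ≤ (p n z.1 * W n s z.1 z.2).toReal
        * (1 / (n : ℝ) * Real.log (1 / (p n z.1).toReal)) := by
  have h := real_pt_upper (pp := (p n z.1).toReal) (w := (W n s z.1 z.2).toReal)
    ENNReal.toReal_nonneg ENNReal.toReal_nonneg (pW_toReal_le p W n s z)
  have h2 := mul_le_mul_of_nonneg_left h (show (0:ℝ) ≤ 1 / (n:ℝ) by positivity)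
  simp only [infoDensRate, ENNReal.toReal_mul]
  exact le_trans (le_of_eq (by ring)) (le_trans h2 (le_of_eq (by ring)))

lemma master_lower (n : ℕ) (hn : 1 ≤ n) (s : S) (R : ℝ) :
    R - |R| * (probEvent p W n s {z | infoDensRate p W n s z ≤ R}).toReal
        - 1 / Real.exp 1 * (1 / (n : ℝ))
      ≤ 1 / (n : ℝ) * mutualInfo p W n s := by
  classical
  rw [inv_mul_mutualInfo]
  set Z : A n × B n → ℝ := infoDensRate p W n s with hZdef
  have hμ0 : ∀ z : A n × B n, (0:ℝ) ≤ (p n z.1 * W n s z.1 z.2).toReal :=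
    fun z => ENNReal.toReal_nonneg
  have hPb : (probEvent p W n s {z | Z z ≤ R}).toReal
      = ∑ z : A n × B n, if Z z ≤ R then (p n z.1 * W n s z.1 z.2).toReal else 0 :=
    probEvent_toReal p W n s (fun z => Z z ≤ R)
  have hPb0 : (0:ℝ) ≤ ∑ z : A n × B n, if Z z ≤ R then (p n z.1 * W n s z.1 z.2).toReal else 0 :=
    Finset.sum_nonneg fun z _ => by split_ifs; exacts [hμ0 z, le_refl 0]
  have hcompl : (∑ z : A n × B n, if Z z ≤ R then (0:ℝ) else (p n z.1 * W n s z.1 z.2).toReal)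
      = 1 - ∑ z : A n × B n, if Z z ≤ R then (p n z.1 * W n s z.1 z.2).toReal else 0 := by
    rw [eq_sub_iff_add_eq, ← Finset.sum_add_distrib, ← sum_wgt p W n s]
    exact Finset.sum_congr rfl fun z _ => by split_ifs <;> simp
  have hsplit : (∑ z : A n × B n, (p n z.1 * W n s z.1 z.2).toReal * Z z)
      = (∑ z : A n × B n, if Z z ≤ R then (p n z.1 * W n s z.1 z.2).toReal * Z z else 0)
        + ∑ z : A n × B n, if Z z ≤ R then (0:ℝ) else (p n z.1 * W n s z.1 z.2).toReal * Z z := by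
    rw [← Finset.sum_add_distrib]
    exact Finset.sum_congr rfl fun z _ => by split_ifs <;> ring
  have h1 : R * (1 - ∑ z : A n × B n, if Z z ≤ R then (p n z.1 * W n s z.1 z.2).toReal else 0)
      ≤ ∑ z : A n × B n, if Z z ≤ R then (0:ℝ) else (p n z.1 * W n s z.1 z.2).toReal * Z z := by
    rw [← hcompl, Finset.mul_sum]
    refine Finset.sum_le_sum fun z _ => ?_
    split_ifs with h
    · simp
    · rw [mul_comm]
      exact mul_le_mul_of_nonneg_left (not_le.mp h).le (hμ0 z)
  have h2 : (∑ z : A n × B n, (p n z.1 * W n s z.1 z.2).toReal * min (Z z) 0)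
      ≤ ∑ z : A n × B n, if Z z ≤ R then (p n z.1 * W n s z.1 z.2).toReal * Z z else 0 :=
    Finset.sum_le_sum fun z _ => by
      split_ifs with h
      · exact mul_le_mul_of_nonneg_left (min_le_left _ _) (hμ0 z)
      · exact mul_nonpos_of_nonneg_of_nonpos (hμ0 z) (min_le_right _ _)
  have hsum1 : (∑ z : A n × B n, (p n z.1).toReal * (outDist p W n s z.2).toReal) = 1 := by
    rw [Fintype.sum_prod_type]
    have h : ∀ x : A n, (∑ y : B n, (p n x).toReal * (outDist p W n s y).toReal)
        = (p n x).toReal :=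
      fun x => by rw [← Finset.mul_sum, sum_out_toReal p W n s, mul_one]
    simp_rw [h]
    exact pmf_fin_sum_toReal (p n)
  have h3 : -(1 / Real.exp 1 * (1 / (n : ℝ)))
      ≤ ∑ z : A n × B n, (p n z.1 * W n s z.1 z.2).toReal * min (Z z) 0 := by
    have h3eq : (∑ z : A n × B n,
          1 / (n:ℝ) * -((p n z.1).toReal * (outDist p W n s z.2).toReal / Real.exp 1))
        = -(1 / Real.exp 1 * (1 / (n : ℝ))) := by
      rw [← Finset.mul_sum]
      simp_rw [← neg_div]
      rw [← Finset.sum_div, Finset.sum_neg_distrib, hsum1]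
      ring
    calc -(1 / Real.exp 1 * (1 / (n : ℝ)))
        = ∑ z : A n × B n,
            1 / (n:ℝ) * -((p n z.1).toReal * (outDist p W n s z.2).toReal / Real.exp 1) :=
          h3eq.symm
      _ ≤ ∑ z : A n × B n, (p n z.1 * W n s z.1 z.2).toReal * min (Z z) 0 :=
          Finset.sum_le_sum fun z _ => pt_lower_z p W n s z
  have hR1 : R - |R| * (∑ z : A n × B n, if Z z ≤ R then (p n z.1 * W n s z.1 z.2).toReal else 0)
      ≤ R * (1 - ∑ z : A n × B n, if Z z ≤ R then (p n z.1 * W n s z.1 z.2).toReal else 0) := by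
    nlinarith [mul_le_mul_of_nonneg_right (le_abs_self R) hPb0]
  rw [hPb]
  linarith

lemma global_lower (n : ℕ) (s : S) : -1 ≤ 1 / (n : ℝ) * mutualInfo p W n s := by
  rcases Nat.eq_zero_or_pos n with h0 | h1
  · subst h0
    simp only [Nat.cast_zero, div_zero, zero_mul]
    norm_num
  · have h := master_lower p W n h1 s 0
    have he : (2:ℝ) ≤ Real.exp 1 := by
      have := Real.add_one_le_exp (1:ℝ); linarith
    have hn1 : (1:ℝ) ≤ (n:ℝ) := by exact_mod_cast h1
    have hPb0 : (0:ℝ) ≤ (probEvent p W n s {z | infoDensRate p W n s z ≤ 0}).toReal :=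
      ENNReal.toReal_nonneg
    have hinv : 1 / Real.exp 1 * (1 / (n:ℝ)) ≤ 1 := by
      have h2 : 1 / Real.exp 1 ≤ 1 := by rw [div_le_one (by linarith)]; linarith
      have h3 : 1 / (n:ℝ) ≤ 1 := by rw [div_le_one (by linarith)]; linarith
      have h4 : (0:ℝ) ≤ 1 / (n:ℝ) := by positivity
      nlinarith
    simp only [abs_zero, zero_mul, sub_zero, zero_sub] at h
    linarith

end Sums

/-! ### Lemmas specific to per-symbol input alphabets -/

section Main

variable {𝒳 : Type*} [Fintype 𝒳] [Nonempty 𝒳] {B' : ℕ → Type*} [∀ n, Fintype (B' n)]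
variable (p : ∀ n : ℕ, PMF (Fin n → 𝒳)) (W : ∀ n : ℕ, S → (Fin n → 𝒳) → PMF (B' n))

lemma card_X_one_le : (1:ℝ) ≤ (Fintype.card 𝒳 : ℝ) := by
  have h : 1 ≤ Fintype.card 𝒳 := Fintype.card_pos
  exact_mod_cast h

lemma alpha_nonneg (n : ℕ) (x : Fin n → 𝒳) :
    0 ≤ 1 / (n:ℝ) * Real.log (1 / (p n x).toReal) := by
  rcases eq_or_lt_of_le (ENNReal.toReal_nonneg : (0:ℝ) ≤ (p n x).toReal) with h | h
  · rw [← h]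
    simp
  · have hle1 : (p n x).toReal ≤ 1 := by
      simpa using ENNReal.toReal_mono ENNReal.one_ne_top (PMF.coe_le_one (p n) x)
    have hlog : 0 ≤ Real.log (1 / (p n x).toReal) :=
      Real.log_nonneg (by rw [le_div_iff₀ h, one_mul]; exact hle1)
    have : (0:ℝ) ≤ 1 / (n:ℝ) := by positivity
    exact mul_nonneg this hlog

lemma tail_alpha (n : ℕ) (hn : 1 ≤ n) (s : S) :
    (∑ z : (Fin n → 𝒳) × B' n,
        if 2 * Real.log (Fintype.card 𝒳) + 2 < 1 / (n:ℝ) * Real.log (1 / (p n z.1).toReal)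
        then (p n z.1 * W n s z.1 z.2).toReal * (1 / (n:ℝ) * Real.log (1 / (p n z.1).toReal))
        else 0)
      ≤ 2 * Real.exp (-(n:ℝ)) := by
  classical
  have hn0 : (0:ℝ) < (n:ℝ) := by exact_mod_cast hn
  rw [Fintype.sum_prod_type]
  have hx : ∀ x : Fin n → 𝒳,
      (∑ y : B' n,
          if 2 * Real.log (Fintype.card 𝒳) + 2 < 1 / (n:ℝ) * Real.log (1 / (p n x).toReal)
          then (p n x * W n s x y).toReal * (1 / (n:ℝ) * Real.log (1 / (p n x).toReal))
          else 0)
        = (if 2 * Real.log (Fintype.card 𝒳) + 2 < 1 / (n:ℝ) * Real.log (1 / (p n x).toReal)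
          then (p n x).toReal * (1 / (n:ℝ) * Real.log (1 / (p n x).toReal))
          else 0) := by
    intro x
    split_ifs with h
    · simp_rw [ENNReal.toReal_mul]
      rw [← Finset.sum_mul, ← Finset.mul_sum, pmf_fin_sum_toReal, mul_one]
    · simp
  simp_rw [hx]
  have hpt : ∀ x : Fin n → 𝒳,
      (if 2 * Real.log (Fintype.card 𝒳) + 2 < 1 / (n:ℝ) * Real.log (1 / (p n x).toReal)
        then (p n x).toReal * (1 / (n:ℝ) * Real.log (1 / (p n x).toReal))
        else 0)
      ≤ 1 / (n:ℝ) *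
        (if (n:ℝ) * (2 * Real.log (Fintype.card 𝒳) + 2) < Real.log (1 / (p n x).toReal)
          then (p n x).toReal * Real.log (1 / (p n x).toReal)
          else 0) := by
    intro x
    have hiff : (2 * Real.log (Fintype.card 𝒳) + 2 < 1 / (n:ℝ) * Real.log (1 / (p n x).toReal))
        ↔ ((n:ℝ) * (2 * Real.log (Fintype.card 𝒳) + 2) < Real.log (1 / (p n x).toReal)) := by
      rw [one_div, inv_mul_eq_div, lt_div_iff₀ hn0, mul_comm]
    by_cases h : (n:ℝ) * (2 * Real.log (Fintype.card 𝒳) + 2) < Real.log (1 / (p n x).toReal)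
    · rw [if_pos (hiff.mpr h), if_pos h]
      exact le_of_eq (by ring)
    · rw [if_neg (fun hh => h (hiff.mp hh)), if_neg h, mul_zero]
  calc (∑ x : Fin n → 𝒳,
        if 2 * Real.log (Fintype.card 𝒳) + 2 < 1 / (n:ℝ) * Real.log (1 / (p n x).toReal)
        then (p n x).toReal * (1 / (n:ℝ) * Real.log (1 / (p n x).toReal))
        else 0)
      ≤ ∑ x : Fin n → 𝒳, 1 / (n:ℝ) *
          (if (n:ℝ) * (2 * Real.log (Fintype.card 𝒳) + 2) < Real.log (1 / (p n x).toReal)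
            then (p n x).toReal * Real.log (1 / (p n x).toReal)
            else 0) := Finset.sum_le_sum fun x _ => hpt x
    _ = 1 / (n:ℝ) * ∑ x : Fin n → 𝒳,
          (if (n:ℝ) * (2 * Real.log (Fintype.card 𝒳) + 2) < Real.log (1 / (p n x).toReal)
            then (p n x).toReal * Real.log (1 / (p n x).toReal)
            else 0) := by rw [Finset.mul_sum]
    _ ≤ 1 / (n:ℝ) * ((Fintype.card (Fin n → 𝒳) : ℝ)
          * (2 * Real.exp (-((n:ℝ) * (2 * Real.log (Fintype.card 𝒳) + 2)) / 2))) :=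
        mul_le_mul_of_nonneg_left (tail_sum (p n) ((n:ℝ) * (2 * Real.log (Fintype.card 𝒳) + 2)))
          (by positivity)
    _ = 1 / (n:ℝ) * (2 * Real.exp (-(n:ℝ))) := by
        have hcard : (Fintype.card (Fin n → 𝒳) : ℝ)
            = Real.exp ((n:ℝ) * Real.log (Fintype.card 𝒳)) := by
          rw [Fintype.card_fun, Fintype.card_fin, Nat.cast_pow, Real.exp_nat_mul,
            Real.exp_log (by linarith [card_X_one_le (𝒳 := 𝒳)] : (0:ℝ) < (Fintype.card 𝒳 : ℝ))]
        rw [hcard,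
          show Real.exp ((n:ℝ) * Real.log (Fintype.card 𝒳))
              * (2 * Real.exp (-((n:ℝ) * (2 * Real.log (Fintype.card 𝒳) + 2)) / 2))
            = 2 * (Real.exp ((n:ℝ) * Real.log (Fintype.card 𝒳))
              * Real.exp (-((n:ℝ) * (2 * Real.log (Fintype.card 𝒳) + 2)) / 2)) from by ring,
          ← Real.exp_add]
        congr 2
        ring
    _ ≤ 2 * Real.exp (-(n:ℝ)) := by
        have h1 : 1 / (n:ℝ) ≤ 1 := by rw [div_le_one hn0]; exact_mod_cast hn
        exact mul_le_of_le_one_left (by positivity) h1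

lemma sum_bad_le (n : ℕ) (hn : 1 ≤ n) (s : S) (P : (Fin n → 𝒳) × B' n → Prop)
    [DecidablePred P] :
    (∑ z : (Fin n → 𝒳) × B' n,
        if P z then (p n z.1 * W n s z.1 z.2).toReal * infoDensRate p W n s z else 0)
      ≤ (2 * Real.log (Fintype.card 𝒳) + 2) * (probEvent p W n s {z | P z}).toReal
        + 2 * Real.exp (-(n:ℝ)) := by
  classical
  have ha0 : (0:ℝ) ≤ 2 * Real.log (Fintype.card 𝒳) + 2 := by
    have := Real.log_nonneg (card_X_one_le (𝒳 := 𝒳)); linarith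
  have step1 : (∑ z : (Fin n → 𝒳) × B' n,
        if P z then (p n z.1 * W n s z.1 z.2).toReal * infoDensRate p W n s z else 0)
      ≤ ∑ z : (Fin n → 𝒳) × B' n,
          if P z then (p n z.1 * W n s z.1 z.2).toReal
            * (1 / (n:ℝ) * Real.log (1 / (p n z.1).toReal)) else 0 :=
    Finset.sum_le_sum fun z _ => by
      split_ifs with h
      · exact pt_upper_z p W n s z
      · exact le_refl 0
  have step2 : ∀ z : (Fin n → 𝒳) × B' n,
      (if P z then (p n z.1 * W n s z.1 z.2).toReal
          * (1 / (n:ℝ) * Real.log (1 / (p n z.1).toReal)) else 0)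
        ≤ (if P z then (p n z.1 * W n s z.1 z.2).toReal
            * (2 * Real.log (Fintype.card 𝒳) + 2) else 0)
          + (if 2 * Real.log (Fintype.card 𝒳) + 2
                < 1 / (n:ℝ) * Real.log (1 / (p n z.1).toReal)
            then (p n z.1 * W n s z.1 z.2).toReal
              * (1 / (n:ℝ) * Real.log (1 / (p n z.1).toReal)) else 0) := by
    intro z
    have hμz : (0:ℝ) ≤ (p n z.1 * W n s z.1 z.2).toReal := ENNReal.toReal_nonneg
    by_cases hE : P z
    · rw [if_pos hE, if_pos hE]
      by_cases hc : 2 * Real.log (Fintype.card 𝒳) + 2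
          < 1 / (n:ℝ) * Real.log (1 / (p n z.1).toReal)
      · rw [if_pos hc]
        have h0 : (0:ℝ) ≤ (p n z.1 * W n s z.1 z.2).toReal
            * (2 * Real.log (Fintype.card 𝒳) + 2) := mul_nonneg hμz ha0
        linarith
      · rw [if_neg hc, add_zero]
        exact mul_le_mul_of_nonneg_left (not_lt.mp hc) hμz
    · rw [if_neg hE, if_neg hE, zero_add]
      by_cases hc : 2 * Real.log (Fintype.card 𝒳) + 2
          < 1 / (n:ℝ) * Real.log (1 / (p n z.1).toReal)
      · rw [if_pos hc]
        exact mul_nonneg hμz (alpha_nonneg p n z.1)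
      · rw [if_neg hc]
  have step3 : (∑ z : (Fin n → 𝒳) × B' n,
        if P z then (p n z.1 * W n s z.1 z.2).toReal
          * (2 * Real.log (Fintype.card 𝒳) + 2) else 0)
      = (2 * Real.log (Fintype.card 𝒳) + 2) * (probEvent p W n s {z | P z}).toReal := by
    rw [probEvent_toReal p W n s P, Finset.mul_sum]
    exact Finset.sum_congr rfl fun z _ => by split_ifs <;> ring
  calc (∑ z : (Fin n → 𝒳) × B' n,
        if P z then (p n z.1 * W n s z.1 z.2).toReal * infoDensRate p W n s z else 0)
      ≤ ∑ z : (Fin n → 𝒳) × B' n,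
          if P z then (p n z.1 * W n s z.1 z.2).toReal
            * (1 / (n:ℝ) * Real.log (1 / (p n z.1).toReal)) else 0 := step1
    _ ≤ (∑ z : (Fin n → 𝒳) × B' n,
          if P z then (p n z.1 * W n s z.1 z.2).toReal
            * (2 * Real.log (Fintype.card 𝒳) + 2) else 0)
        + ∑ z : (Fin n → 𝒳) × B' n,
            (if 2 * Real.log (Fintype.card 𝒳) + 2
                < 1 / (n:ℝ) * Real.log (1 / (p n z.1).toReal)
              then (p n z.1 * W n s z.1 z.2).toReal
                * (1 / (n:ℝ) * Real.log (1 / (p n z.1).toReal)) else 0) := by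
        rw [← Finset.sum_add_distrib]
        exact Finset.sum_le_sum fun z _ => step2 z
    _ ≤ (2 * Real.log (Fintype.card 𝒳) + 2) * (probEvent p W n s {z | P z}).toReal
        + 2 * Real.exp (-(n:ℝ)) := by
        rw [step3]
        exact add_le_add_right (tail_alpha p W n hn s) _

lemma master_upper (n : ℕ) (hn : 1 ≤ n) (s : S) (c δ : ℝ) :
    1 / (n : ℝ) * mutualInfo p W n s
      ≤ (c + δ)
        + (|c + δ| + (2 * Real.log (Fintype.card 𝒳) + 2))
          * (probEvent p W n s {z | δ < |infoDensRate p W n s z - c|}).toReal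
        + 2 * Real.exp (-(n:ℝ)) := by
  classical
  rw [inv_mul_mutualInfo]
  set Z : (Fin n → 𝒳) × B' n → ℝ := infoDensRate p W n s with hZdef
  have hμ0 : ∀ z : (Fin n → 𝒳) × B' n, (0:ℝ) ≤ (p n z.1 * W n s z.1 z.2).toReal :=
    fun z => ENNReal.toReal_nonneg
  have hPb : (probEvent p W n s {z | δ < |Z z - c|}).toReal
      = ∑ z : (Fin n → 𝒳) × B' n,
          if δ < |Z z - c| then (p n z.1 * W n s z.1 z.2).toReal else 0 :=
    probEvent_toReal p W n s (fun z => δ < |Z z - c|)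
  have hPb0 : (0:ℝ) ≤ ∑ z : (Fin n → 𝒳) × B' n,
      if δ < |Z z - c| then (p n z.1 * W n s z.1 z.2).toReal else 0 :=
    Finset.sum_nonneg fun z _ => by split_ifs; exacts [hμ0 z, le_refl 0]
  have hcompl : (∑ z : (Fin n → 𝒳) × B' n,
        if δ < |Z z - c| then (0:ℝ) else (p n z.1 * W n s z.1 z.2).toReal)
      = 1 - ∑ z : (Fin n → 𝒳) × B' n,
          if δ < |Z z - c| then (p n z.1 * W n s z.1 z.2).toReal else 0 := by
    rw [eq_sub_iff_add_eq, ← Finset.sum_add_distrib, ← sum_wgt p W n s]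
    exact Finset.sum_congr rfl fun z _ => by split_ifs <;> simp
  have hsplit : (∑ z : (Fin n → 𝒳) × B' n, (p n z.1 * W n s z.1 z.2).toReal * Z z)
      = (∑ z : (Fin n → 𝒳) × B' n,
          if δ < |Z z - c| then (p n z.1 * W n s z.1 z.2).toReal * Z z else 0)
        + ∑ z : (Fin n → 𝒳) × B' n,
            if δ < |Z z - c| then (0:ℝ) else (p n z.1 * W n s z.1 z.2).toReal * Z z := by
    rw [← Finset.sum_add_distrib]
    exact Finset.sum_congr rfl fun z _ => by split_ifs <;> ring
  have hbad := sum_bad_le p W n hn s (fun z => δ < |Z z - c|)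
  rw [← hZdef] at hbad
  have hgood : (∑ z : (Fin n → 𝒳) × B' n,
        if δ < |Z z - c| then (0:ℝ) else (p n z.1 * W n s z.1 z.2).toReal * Z z)
      ≤ (c + δ) * ∑ z : (Fin n → 𝒳) × B' n,
          (if δ < |Z z - c| then (0:ℝ) else (p n z.1 * W n s z.1 z.2).toReal) := by
    rw [Finset.mul_sum]
    refine Finset.sum_le_sum fun z _ => ?_
    split_ifs with h
    · simp
    · have hZle : Z z ≤ c + δ := by
        have := le_trans (le_abs_self (Z z - c)) (not_lt.mp h)
        linarith
      rw [mul_comm (c + δ)]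
      exact mul_le_mul_of_nonneg_left hZle (hμ0 z)
  have habs : (c + δ) * (1 - ∑ z : (Fin n → 𝒳) × B' n,
        if δ < |Z z - c| then (p n z.1 * W n s z.1 z.2).toReal else 0)
      ≤ (c + δ) + |c + δ| * ∑ z : (Fin n → 𝒳) × B' n,
          (if δ < |Z z - c| then (p n z.1 * W n s z.1 z.2).toReal else 0) := by
    nlinarith [mul_le_mul_of_nonneg_right (neg_abs_le (c + δ)) hPb0]
  rw [hcompl] at hgood
  rw [hPb] at hbad ⊢
  linarith

lemma global_upper (n : ℕ) (hn : 1 ≤ n) (s : S) :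
    1 / (n : ℝ) * mutualInfo p W n s ≤ 2 * Real.log (Fintype.card 𝒳) + 4 := by
  classical
  rw [inv_mul_mutualInfo]
  have h1 : (∑ z : (Fin n → 𝒳) × B' n,
        (p n z.1 * W n s z.1 z.2).toReal * infoDensRate p W n s z)
      = ∑ z : (Fin n → 𝒳) × B' n,
          if True then (p n z.1 * W n s z.1 z.2).toReal * infoDensRate p W n s z else 0 := by
    simp
  rw [h1]
  have hbad := sum_bad_le p W n hn s (fun _ => True)
  have hple : (probEvent p W n s {z : (Fin n → 𝒳) × B' n | True}).toReal ≤ 1 := by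
    simpa using ENNReal.toReal_mono ENNReal.one_ne_top (probEvent_le_one p W n s _)
  have hP0 : (0:ℝ) ≤ (probEvent p W n s {z : (Fin n → 𝒳) × B' n | True}).toReal :=
    ENNReal.toReal_nonneg
  have ha0 : (0:ℝ) ≤ 2 * Real.log (Fintype.card 𝒳) + 2 := by
    have := Real.log_nonneg (card_X_one_le (𝒳 := 𝒳)); linarith
  have hexp : Real.exp (-(n:ℝ)) ≤ 1 := by
    rw [Real.exp_le_one_iff]
    simp
  nlinarith [hbad]

end Main

theorem cinf_eq_liminf_iInf_mutualInfo' {S : Type*} [Nonempty S]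
    {𝒳 : Type*} [Fintype 𝒳] [Nonempty 𝒳]
    {B : ℕ → Type*} [∀ n, Fintype (B n)] [∀ n, Nonempty (B n)]
    (p : ∀ n : ℕ, PMF (Fin n → 𝒳)) (W : ∀ n : ℕ, S → (Fin n → 𝒳) → PMF (B n))
    (hfin₁ : ({R : ℝ | Tendsto (fun n => ⨆ s : S,
      probEvent p W n s {z | infoDensRate p W n s z ≤ R}) atTop (nhds 0)}).Nonempty)
    (hfin₂ : BddAbove ({R : ℝ | Tendsto (fun n => ⨆ s : S,
      probEvent p W n s {z | infoDensRate p W n s z ≤ R}) atTop (nhds 0)}))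
    (c : ℝ)
    (hcdef : c = sSup {R : ℝ | Tendsto (fun n => ⨆ s : S,
      probEvent p W n s {z | infoDensRate p W n s z ≤ R}) atTop (nhds 0)})
    (hconv : ∀ δ : ℝ, 0 < δ →
      Filter.liminf (fun n => ⨅ s : S,
        probEvent p W n s {z | δ < |infoDensRate p W n s z - c|}) atTop = 0) :
    c = Filter.liminf (fun n : ℕ => ⨅ s : S, (1 / (n : ℝ)) * mutualInfo p W n s) atTop := by
  classical
  have hBddR : ∀ n : ℕ, BddBelow (Set.range fun s : S => 1 / (n:ℝ) * mutualInfo p W n s) :=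
    fun n => ⟨-1, by rintro x ⟨s, rfl⟩; exact global_lower p W n s⟩
  have hflb : ∀ n : ℕ, -1 ≤ ⨅ s : S, 1 / (n:ℝ) * mutualInfo p W n s :=
    fun n => le_ciInf fun s => global_lower p W n s
  have hlog0 : (0:ℝ) ≤ Real.log (Fintype.card 𝒳) := Real.log_nonneg (card_X_one_le (𝒳 := 𝒳))
  have hfub : ∀ n : ℕ,
      (⨅ s : S, 1 / (n:ℝ) * mutualInfo p W n s) ≤ 2 * Real.log (Fintype.card 𝒳) + 4 := by
    intro n
    rcases Nat.eq_zero_or_pos n with h0 | h1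
    · subst h0
      have h2 : (⨅ s : S, 1 / ((0:ℕ):ℝ) * mutualInfo p W 0 s)
          ≤ 1 / ((0:ℕ):ℝ) * mutualInfo p W 0 (Classical.arbitrary S) := ciInf_le (hBddR 0) _
      have h3 : 1 / ((0:ℕ):ℝ) * mutualInfo p W 0 (Classical.arbitrary S) = 0 := by
        simp
      rw [h3] at h2
      linarith
    · exact le_trans (ciInf_le (hBddR n) (Classical.arbitrary S)) (global_upper p W n h1 _)
  have hfbdd_ge : IsBoundedUnder (· ≥ ·) atTop
      (fun n : ℕ => ⨅ s : S, 1 / (n:ℝ) * mutualInfo p W n s) :=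
    Filter.isBoundedUnder_of ⟨-1, fun n => hflb n⟩
  have hfbdd_le : IsBoundedUnder (· ≤ ·) atTop
      (fun n : ℕ => ⨅ s : S, 1 / (n:ℝ) * mutualInfo p W n s) :=
    Filter.isBoundedUnder_of ⟨2 * Real.log (Fintype.card 𝒳) + 4, fun n => hfub n⟩
  have hfcob : IsCoboundedUnder (· ≥ ·) atTop
      (fun n : ℕ => ⨅ s : S, 1 / (n:ℝ) * mutualInfo p W n s) :=
    hfbdd_le.isCoboundedUnder_ge
  -- Step 1 : c ≤ liminf
  have step1 : ∀ R : ℝ, R < c →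
      R ≤ liminf (fun n : ℕ => ⨅ s : S, 1 / (n:ℝ) * mutualInfo p W n s) atTop := by
    intro R hR
    rw [hcdef] at hR
    obtain ⟨R', hR'mem, hRR'⟩ := exists_lt_of_lt_csSup hfin₁ hR
    have hR't : Tendsto (fun n => ⨆ s : S,
        probEvent p W n s {z | infoDensRate p W n s z ≤ R'}) atTop (nhds 0) := hR'mem
    have htend : Tendsto (fun n => ⨆ s : S,
        probEvent p W n s {z | infoDensRate p W n s z ≤ R}) atTop (nhds 0) := by
      refine tendsto_of_tendsto_of_tendsto_of_le_of_le tendsto_const_nhds hR't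
        (fun n => zero_le') (fun n => ?_)
      exact iSup_mono fun s => probEvent_mono p W n s (fun z hz => le_trans hz hRR'.le)
    have htoReal : Tendsto (fun n => (⨆ s : S,
        probEvent p W n s {z | infoDensRate p W n s z ≤ R}).toReal) atTop (nhds 0) := by
      have h := (ENNReal.tendsto_toReal (show (0:ℝ≥0∞) ≠ ⊤ by simp)).comp htend
      simpa [Function.comp_def] using h
    have hg : Tendsto (fun n : ℕ => R - |R| * (⨆ s : S,
        probEvent p W n s {z | infoDensRate p W n s z ≤ R}).toReal
          - 1 / Real.exp 1 * (1 / (n:ℝ))) atTop (nhds R) := by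
      have h1 : Tendsto (fun n : ℕ => 1 / Real.exp 1 * (1 / (n:ℝ))) atTop (nhds 0) := by
        simpa using tendsto_one_div_atTop_nhds_zero_nat.const_mul (1 / Real.exp 1)
      have h2 := Filter.Tendsto.sub
        (tendsto_const_nhds : Tendsto (fun _ : ℕ => R) atTop (nhds R))
        (htoReal.const_mul |R|)
      have h3 := h2.sub h1
      simpa using h3
    have hle : ∀ᶠ n : ℕ in atTop,
        (R - |R| * (⨆ s : S,
            probEvent p W n s {z | infoDensRate p W n s z ≤ R}).toReal
          - 1 / Real.exp 1 * (1 / (n:ℝ)))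
          ≤ ⨅ s : S, 1 / (n:ℝ) * mutualInfo p W n s := by
      filter_upwards [eventually_ge_atTop 1] with n hn
      refine le_ciInf fun s => ?_
      have hm := master_lower p W n hn s R
      have hsupne : (⨆ s' : S, probEvent p W n s' {z | infoDensRate p W n s' z ≤ R}) ≠ ⊤ :=
        ne_top_of_le_ne_top ENNReal.one_ne_top (iSup_le fun s' => probEvent_le_one p W n s' _)
      have hps : (probEvent p W n s {z | infoDensRate p W n s z ≤ R}).toReal
          ≤ (⨆ s' : S, probEvent p W n s' {z | infoDensRate p W n s' z ≤ R}).toReal :=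
        ENNReal.toReal_mono hsupne
          (le_iSup (fun s' => probEvent p W n s' {z | infoDensRate p W n s' z ≤ R}) s)
      nlinarith [mul_le_mul_of_nonneg_left hps (abs_nonneg R)]
    calc R = liminf (fun n : ℕ => R - |R| * (⨆ s : S,
          probEvent p W n s {z | infoDensRate p W n s z ≤ R}).toReal
          - 1 / Real.exp 1 * (1 / (n:ℝ))) atTop := hg.liminf_eq.symm
      _ ≤ liminf (fun n : ℕ => ⨅ s : S, 1 / (n:ℝ) * mutualInfo p W n s) atTop :=
          liminf_le_liminf hle hg.isBoundedUnder_ge hfcob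
  have hcle : c ≤ liminf (fun n : ℕ => ⨅ s : S, 1 / (n:ℝ) * mutualInfo p W n s) atTop := by
    refine le_of_forall_lt fun R hR => ?_
    obtain ⟨R', hR1, hR2⟩ := exists_between hR
    exact lt_of_lt_of_le hR1 (step1 R' hR2)
  -- Step 2 : liminf ≤ c
  have hstep2 : liminf (fun n : ℕ => ⨅ s : S, 1 / (n:ℝ) * mutualInfo p W n s) atTop ≤ c := by
    refine le_of_forall_pos_le_add fun η hη => ?_
    have hδ : (0:ℝ) < η / 2 := by linarith
    have hA0 : (0:ℝ) ≤ 2 * Real.log (Fintype.card 𝒳) + 2 := by linarith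
    have hK0 : (0:ℝ) < |c + η/2| + (2 * Real.log (Fintype.card 𝒳) + 2) + 1 := by
      have := abs_nonneg (c + η/2); linarith
    have hε : (0:ℝ) < η/4 / (|c + η/2| + (2 * Real.log (Fintype.card 𝒳) + 2) + 1) := by
      positivity
    have hconv2 := hconv (η/2) hδ
    have hfreq : ∃ᶠ n in atTop, (⨅ s : S,
        probEvent p W n s {z | η/2 < |infoDensRate p W n s z - c|})
          < ENNReal.ofReal (η/4 / (|c + η/2| + (2 * Real.log (Fintype.card 𝒳) + 2) + 1)) := by
      refine frequently_lt_of_liminf_lt (by isBoundedDefault) ?_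
      rw [hconv2]
      exact ENNReal.ofReal_pos.mpr hε
    have hexp0 : Tendsto (fun n : ℕ => 2 * Real.exp (-(n:ℝ))) atTop (nhds 0) := by
      have h1 : Tendsto (fun n : ℕ => -(n:ℝ)) atTop atBot :=
        tendsto_neg_atTop_atBot.comp tendsto_natCast_atTop_atTop
      have h2 := Real.tendsto_exp_atBot.comp h1
      simpa using h2.const_mul 2
    have hev : ∀ᶠ n : ℕ in atTop, 1 ≤ n ∧ 2 * Real.exp (-(n:ℝ)) ≤ η/4 := by
      refine (eventually_ge_atTop 1).and ?_
      have h3 := hexp0.eventually_lt_const (show (0:ℝ) < η/4 by linarith)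
      exact h3.mono fun n h => h.le
    have hfreq2 : ∃ᶠ n : ℕ in atTop,
        (⨅ s : S, 1 / (n:ℝ) * mutualInfo p W n s) ≤ c + η := by
      refine (hfreq.and_eventually hev).mono ?_
      rintro n ⟨hlt, hn1, hexpn⟩
      obtain ⟨s, hs⟩ := iInf_lt_iff.mp hlt
      have hPbR : (probEvent p W n s {z | η/2 < |infoDensRate p W n s z - c|}).toReal
          ≤ η/4 / (|c + η/2| + (2 * Real.log (Fintype.card 𝒳) + 2) + 1) :=
        ENNReal.toReal_le_of_le_ofReal hε.le hs.le
      have hPb0 : (0:ℝ)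
          ≤ (probEvent p W n s {z | η/2 < |infoDensRate p W n s z - c|}).toReal :=
        ENNReal.toReal_nonneg
      have hm := master_upper p W n hn1 s c (η/2)
      have hfn : (⨅ s' : S, 1 / (n:ℝ) * mutualInfo p W n s')
          ≤ 1 / (n:ℝ) * mutualInfo p W n s := ciInf_le (hBddR n) s
      have hmul : (|c + η/2| + (2 * Real.log (Fintype.card 𝒳) + 2))
            * (probEvent p W n s {z | η/2 < |infoDensRate p W n s z - c|}).toReal
          ≤ (|c + η/2| + (2 * Real.log (Fintype.card 𝒳) + 2) + 1)
            * (η/4 / (|c + η/2| + (2 * Real.log (Fintype.card 𝒳) + 2) + 1)) := by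
        refine mul_le_mul (by linarith) hPbR hPb0 (le_of_lt hK0)
      have hKε : (|c + η/2| + (2 * Real.log (Fintype.card 𝒳) + 2) + 1)
          * (η/4 / (|c + η/2| + (2 * Real.log (Fintype.card 𝒳) + 2) + 1)) = η/4 := by
        field_simp
      rw [hKε] at hmul
      linarith
    exact liminf_le_of_frequently_le hfreq2 hfbdd_ge
  exact le_antisymm hcle hstep2

/-- if the input alphabets are per-symbol (`A_n = 𝒳ⁿ`), `cinf I(X;Y)` is
finite, and for every `δ > 0` `liminf_n inf_s P(|Z_{n,s} − cinf I(X;Y)| > δ) = 0`, then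
`cinf I(X;Y) = liminf_n inf_s (1/n)·I(Xⁿ;Yⁿ|s)`. -/
theorem cinf_eq_liminf_iInf_mutualInfo {S : Type*} [Nonempty S]
    {𝒳 : Type*} [Fintype 𝒳] [Nonempty 𝒳]
    {B : ℕ → Type*} [∀ n, Fintype (B n)] [∀ n, Nonempty (B n)]
    (p : ∀ n : ℕ, PMF (Fin n → 𝒳)) (W : ∀ n : ℕ, S → (Fin n → 𝒳) → PMF (B n))
    (hfin₁ : (cinfISet p W).Nonempty) (hfin₂ : BddAbove (cinfISet p W))
    (hconv : ∀ δ : ℝ, 0 < δ →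
      Filter.liminf (fun n => ⨅ s : S,
        probEvent p W n s {z | δ < |infoDensRate p W n s z - cinfI p W|}) atTop = 0) :
    cinfI p W =
      Filter.liminf (fun n : ℕ => ⨅ s : S, (1 / (n : ℝ)) * mutualInfo p W n s) atTop := by
  exact cinf_eq_liminf_iInf_mutualInfo' p W hfin₁ hfin₂ (cinfI p W) rfl hconv

end
end

section
/- Chain of information-rate inequalities: in the general compound channel setting with per-symbol alphabets A_n = 𝒳ⁿ and B_n = 𝒴ⁿ for fixed nonempty finite sets 𝒳 and 𝒴, and assuming cinf I(X;Y) and csup I(X;Y) are finite, one has cinf I(X;Y) ≤ liminf_{n→∞} inf_{s∈S} (1/n)·I(X^n;Y^n|s) ≤ limsup_{n→∞} sup_{s∈S} (1/n)·I(X^n;Y^n|s) ≤ csup I(X;Y). -/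
open Filter
open scoped ENNReal

noncomputable section

variable {S : Type*} {A B : ℕ → Type*}

/-- The set whose infimum is the compound sup-information rate. -/
def csupISet [∀ n, Fintype (A n)] [∀ n, Fintype (B n)]
    (p : ∀ n, PMF (A n)) (W : ∀ n, S → A n → PMF (B n)) : Set ℝ :=
  {R : ℝ | Tendsto (fun n => ⨆ s : S,
      probEvent p W n s {z | R ≤ infoDensRate p W n s z}) atTop (nhds 0)}

/-- The compound sup-information rate `csup I(X;Y)`. -/
def csupI [∀ n, Fintype (A n)] [∀ n, Fintype (B n)]
    (p : ∀ n, PMF (A n)) (W : ∀ n, S → A n → PMF (B n)) : ℝ := sInf (csupISet p W)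

lemma aux_mul_log_div_le (t u : ℝ) (ht : 0 ≤ t) (hu : 0 ≤ u) :
    t * Real.log (u / t) ≤ u / Real.exp 1 := by
  rcases eq_or_lt_of_le ht with h | h
  · simp only [← h, zero_mul]; positivity
  rcases eq_or_lt_of_le hu with h' | h'
  · simp [← h', Real.log_zero]
  have he : (0:ℝ) < Real.exp 1 := Real.exp_pos 1
  have hv : 0 < u / (t * Real.exp 1) := by positivity
  have h1 : Real.log (u / (t * Real.exp 1)) ≤ u / (t * Real.exp 1) - 1 :=
    Real.log_le_sub_one_of_pos hv
  have h2 : Real.log (u / (t * Real.exp 1)) = Real.log (u / t) - 1 := by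
    rw [← div_div, Real.log_div (by positivity : u / t ≠ 0) (ne_of_gt he), Real.log_exp]
  have h3 : Real.log (u / t) ≤ u / (t * Real.exp 1) := by linarith
  have := mul_le_mul_of_nonneg_left h3 ht
  calc t * Real.log (u / t) ≤ t * (u / (t * Real.exp 1)) := this
    _ = u / Real.exp 1 := by field_simp

lemma aux_ub_pointwise (a w q m : ℝ) (ha : 0 ≤ a) (hw : 0 ≤ w) (hq : 0 ≤ q)
    (haw : a * w ≤ q) :
    a * w * Real.log (w / q) ≤ a * w * m + w * (Real.exp (-m) / Real.exp 1) := by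
  have he : (0:ℝ) < Real.exp 1 := Real.exp_pos 1
  have hem : (0:ℝ) < Real.exp (-m) := Real.exp_pos _
  rcases eq_or_lt_of_le ha with h | h
  · simp only [← h, zero_mul, mul_zero, zero_add]
    positivity
  rcases eq_or_lt_of_le hw with h' | h'
  · simp [← h']
  have hq0 : 0 < q := lt_of_lt_of_le (by positivity) haw
  have hlog : Real.log (w / q) ≤ Real.log (1 / a) := by
    apply Real.log_le_log (by positivity)
    rw [div_le_div_iff₀ hq0 h]; nlinarith
  have key : a * Real.log (1 / a) ≤ a * m + Real.exp (-m) / Real.exp 1 := by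
    have h1 := aux_mul_log_div_le a (Real.exp (-m)) ha hem.le
    have h2 : Real.log (Real.exp (-m) / a) = -m + Real.log (1 / a) := by
      rw [Real.log_div (ne_of_gt hem) (ne_of_gt h), Real.log_exp,
        Real.log_div one_ne_zero (ne_of_gt h), Real.log_one]
      ring
    nlinarith
  have step1 : a * w * Real.log (w / q) ≤ a * w * Real.log (1 / a) := by
    have := mul_le_mul_of_nonneg_left hlog (by positivity : (0:ℝ) ≤ a * w)
    linarith
  nlinarith [mul_le_mul_of_nonneg_left key h'.le]

lemma aux_lb_pointwise (a w q : ℝ) (ha : 0 ≤ a) (hw : 0 ≤ w) (hq : 0 ≤ q)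
    (haw : a * w ≤ q) :
    -(a * q) / Real.exp 1 ≤ a * w * Real.log (w / q) := by
  have he : (0:ℝ) < Real.exp 1 := Real.exp_pos 1
  have hnn : (0:ℝ) ≤ (a * q) / Real.exp 1 := by positivity
  rcases eq_or_lt_of_le ha with h | h
  · simp [← h]
  rcases eq_or_lt_of_le hw with h' | h'
  · simp only [← h', mul_zero, zero_mul]
    rw [neg_div]; linarith
  have hq0 : 0 < q := lt_of_lt_of_le (by positivity) haw
  have h1 : w * Real.log (q / w) ≤ q / Real.exp 1 := aux_mul_log_div_le w q hw hq
  have h2 : Real.log (w / q) = - Real.log (q / w) := by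
    rw [← Real.log_inv, inv_div]
  rw [h2]
  have := mul_le_mul_of_nonneg_left h1 ha
  calc -(a*q)/Real.exp 1 = -(a * (q / Real.exp 1)) := by ring
    _ ≤ -(a * (w * Real.log (q/w))) := by linarith
    _ = a * w * -Real.log (q/w) := by ring
variable [∀ n, Fintype (A n)] [∀ n, Fintype (B n)]
  (p : ∀ n, PMF (A n)) (W : ∀ n, S → A n → PMF (B n)) (n : ℕ) (s : S)

lemma aux_pmf_ne_top {α : Type*} (P : PMF α) (x : α) : P x ≠ ⊤ :=
  ne_top_of_le_ne_top ENNReal.one_ne_top (P.coe_le_one x)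

lemma aux_pw_ne_top (x : A n) (y : B n) : p n x * W n s x y ≠ ⊤ :=
  ENNReal.mul_ne_top (aux_pmf_ne_top _ _) (aux_pmf_ne_top _ _)

lemma aux_sum_pmf {α : Type*} [Fintype α] (P : PMF α) : ∑ x : α, P x = 1 := by
  rw [← tsum_fintype (L := SummationFilter.unconditional _)]; exact P.tsum_coe

lemma aux_sum_pmf_toReal {α : Type*} [Fintype α] (P : PMF α) :
    ∑ x : α, (P x).toReal = 1 := by
  rw [← ENNReal.toReal_sum (fun x _ => aux_pmf_ne_top P x), aux_sum_pmf, ENNReal.toReal_one]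

lemma aux_outDist_ne_top (y : B n) : outDist p W n s y ≠ ⊤ := by
  have : outDist p W n s y ≤ 1 := by
    rw [outDist]
    calc ∑ x : A n, p n x * W n s x y ≤ ∑ x : A n, p n x * 1 :=
          Finset.sum_le_sum fun x _ => mul_le_mul_right ((W n s x).coe_le_one y) _
      _ = ∑ x : A n, p n x := by simp
      _ = 1 := aux_sum_pmf _
  exact ne_top_of_le_ne_top ENNReal.one_ne_top this

lemma aux_q_toReal (y : B n) :
    (outDist p W n s y).toReal = ∑ x : A n, (p n x).toReal * (W n s x y).toReal := by
  rw [outDist, ENNReal.toReal_sum (fun x _ => aux_pw_ne_top p W n s x y)]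
  simp [ENNReal.toReal_mul]

lemma aux_aw_le_q (x : A n) (y : B n) :
    (p n x).toReal * (W n s x y).toReal ≤ (outDist p W n s y).toReal := by
  rw [aux_q_toReal]
  exact Finset.single_le_sum (f := fun x => (p n x).toReal * (W n s x y).toReal)
    (fun i _ => by positivity) (Finset.mem_univ x)

lemma aux_sum_q_one : ∑ y : B n, (outDist p W n s y).toReal = 1 := by
  simp only [aux_q_toReal]
  rw [Finset.sum_comm]
  calc ∑ x : A n, ∑ y : B n, (p n x).toReal * (W n s x y).toReal
      = ∑ x : A n, (p n x).toReal * ∑ y : B n, (W n s x y).toReal := by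
        simp [Finset.mul_sum]
    _ = 1 := by simp [aux_sum_pmf_toReal, aux_sum_pmf_toReal (p n)]

lemma aux_sum_r_one :
    ∑ z : A n × B n, (p n z.1).toReal * (W n s z.1 z.2).toReal = 1 := by
  rw [Fintype.sum_prod_type]
  calc ∑ x : A n, ∑ y : B n, (p n x).toReal * (W n s x y).toReal
      = ∑ x : A n, (p n x).toReal * ∑ y : B n, (W n s x y).toReal := by
        simp [Finset.mul_sum]
    _ = 1 := by simp [aux_sum_pmf_toReal, aux_sum_pmf_toReal (p n)]

lemma aux_sum_aq_one :
    ∑ z : A n × B n, (p n z.1).toReal * (outDist p W n s z.2).toReal = 1 := by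
  rw [Fintype.sum_prod_type]
  calc ∑ x : A n, ∑ y : B n, (p n x).toReal * (outDist p W n s y).toReal
      = ∑ x : A n, (p n x).toReal * ∑ y : B n, (outDist p W n s y).toReal := by
        simp [Finset.mul_sum]
    _ = 1 := by simp [aux_sum_q_one, aux_sum_pmf_toReal (p n)]

lemma aux_sum_w_card :
    ∑ z : A n × B n, (W n s z.1 z.2).toReal = (Fintype.card (A n) : ℝ) := by
  rw [Fintype.sum_prod_type]
  simp [aux_sum_pmf_toReal]

lemma aux_probEvent_le_one (E : Set (A n × B n)) : probEvent p W n s E ≤ 1 := by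
  rw [probEvent]
  calc ∑ z : A n × B n, E.indicator (fun z' => p n z'.1 * W n s z'.1 z'.2) z
      ≤ ∑ z : A n × B n, p n z.1 * W n s z.1 z.2 :=
        Finset.sum_le_sum fun z _ => Set.indicator_le_self _ _ z
    _ = ∑ x : A n, ∑ y : B n, p n x * W n s x y := Fintype.sum_prod_type _
    _ = ∑ x : A n, p n x := by
        congr 1; ext x; rw [← Finset.mul_sum, aux_sum_pmf, mul_one]
    _ = 1 := aux_sum_pmf _

lemma aux_probEvent_toReal (E : Set (A n × B n)) :
    (probEvent p W n s E).toReal =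
      ∑ z : A n × B n, E.indicator (fun z' => (p n z'.1).toReal * (W n s z'.1 z'.2).toReal) z := by
  classical
  rw [probEvent, ENNReal.toReal_sum]
  · apply Finset.sum_congr rfl
    intro z _
    by_cases hz : z ∈ E
    · simp [Set.indicator_of_mem hz, ENNReal.toReal_mul]
    · simp [Set.indicator_of_notMem hz]
  · intro z _
    by_cases hz : z ∈ E
    · simpa [Set.indicator_of_mem hz] using aux_pw_ne_top p W n s z.1 z.2
    · simp [Set.indicator_of_notMem hz]

lemma aux_mut_eq :
    mutualInfo p W n s = ∑ z : A n × B n,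
      ((p n z.1).toReal * (W n s z.1 z.2).toReal) *
        Real.log ((W n s z.1 z.2).toReal / (outDist p W n s z.2).toReal) := by
  rw [mutualInfo, Fintype.sum_prod_type (f := fun z : A n × B n =>
    ((p n z.1).toReal * (W n s z.1 z.2).toReal) *
      Real.log ((W n s z.1 z.2).toReal / (outDist p W n s z.2).toReal))]
  exact Finset.sum_congr rfl fun x _ => Finset.sum_congr rfl fun y _ => by
    rw [ENNReal.toReal_mul]

lemma aux_mut_le (hn : 1 ≤ n) (R m : ℝ) :
    mutualInfo p W n s ≤ (n:ℝ)*R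
      + ((n:ℝ)*|R| + m) * (probEvent p W n s {z | R ≤ infoDensRate p W n s z}).toReal
      + (Fintype.card (A n) : ℝ) * (Real.exp (-m) / Real.exp 1) := by
  classical
  set F : Set (A n × B n) := {z | R ≤ infoDensRate p W n s z} with hF
  set r : A n × B n → ℝ := fun z => (p n z.1).toReal * (W n s z.1 z.2).toReal with hr
  set wv : A n × B n → ℝ := fun z => (W n s z.1 z.2).toReal with hwv
  have hn0 : (0:ℝ) < n := by exact_mod_cast hn
  have key : ∀ z : A n × B n,
      r z * Real.log (wv z / (outDist p W n s z.2).toReal) ≤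
        F.indicator r z * m + F.indicator wv z * (Real.exp (-m) / Real.exp 1)
          + (r z - F.indicator r z) * ((n:ℝ)*R) := by
    intro z
    by_cases hz : z ∈ F
    · rw [Set.indicator_of_mem hz, Set.indicator_of_mem hz]
      have hub := aux_ub_pointwise (p n z.1).toReal (W n s z.1 z.2).toReal
        (outDist p W n s z.2).toReal m ENNReal.toReal_nonneg ENNReal.toReal_nonneg
        ENNReal.toReal_nonneg (aux_aw_le_q p W n s z.1 z.2)
      simp only [sub_self, zero_mul, add_zero]
      exact hub
    · rw [Set.indicator_of_notMem hz, Set.indicator_of_notMem hz]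
      have hz' : infoDensRate p W n s z < R := lt_of_not_ge hz
      rw [infoDensRate] at hz'
      have hL : Real.log ((W n s z.1 z.2).toReal / (outDist p W n s z.2).toReal) ≤ (n:ℝ)*R := by
        have h2 := (mul_lt_mul_iff_right₀ hn0).mpr hz'
        rw [← mul_assoc, mul_one_div_cancel (ne_of_gt hn0), one_mul] at h2
        exact le_of_lt h2
      simp only [zero_mul, zero_add, sub_zero]
      exact mul_le_mul_of_nonneg_left hL (by positivity)
  have hsum := Finset.sum_le_sum (fun z (_ : z ∈ Finset.univ) => key z)
  rw [aux_mut_eq] at *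
  refine le_trans hsum ?_
  rw [Finset.sum_add_distrib, Finset.sum_add_distrib, ← Finset.sum_mul, ← Finset.sum_mul,
    ← Finset.sum_mul, Finset.sum_sub_distrib]
  have hD : ∑ z : A n × B n, F.indicator r z = (probEvent p W n s F).toReal :=
    (aux_probEvent_toReal p W n s F).symm
  have hD0 : (0:ℝ) ≤ ∑ z : A n × B n, F.indicator r z :=
    Finset.sum_nonneg fun z _ => Set.indicator_nonneg (fun z _ => by positivity) z
  have hSW : ∑ z : A n × B n, F.indicator wv z ≤ (Fintype.card (A n) : ℝ) := by
    refine le_trans (Finset.sum_le_sum fun z _ => ?_) (le_of_eq (aux_sum_w_card W n s))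
    exact Set.indicator_le_self' (fun z _ => ENNReal.toReal_nonneg) z
  have hR1 : ∑ z : A n × B n, r z = 1 := aux_sum_r_one p W n s
  have hC : (0:ℝ) ≤ Real.exp (-m) / Real.exp 1 := by positivity
  set D := ∑ z : A n × B n, F.indicator r z
  have h3 : D*((n:ℝ)*(-R)) ≤ D*((n:ℝ)*|R|) :=
    mul_le_mul_of_nonneg_left (mul_le_mul_of_nonneg_left (neg_le_abs R) hn0.le) hD0
  have h4 : (∑ z : A n × B n, F.indicator wv z) * (Real.exp (-m) / Real.exp 1)
      ≤ (Fintype.card (A n) : ℝ) * (Real.exp (-m) / Real.exp 1) :=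
    mul_le_mul_of_nonneg_right hSW hC
  rw [hR1, ← hD]
  nlinarith [h3, h4]

lemma aux_mut_ge (hn : 1 ≤ n) (R : ℝ) :
    (n:ℝ)*R - (n:ℝ)*|R| * (probEvent p W n s {z | infoDensRate p W n s z ≤ R}).toReal
      - 1/Real.exp 1 ≤ mutualInfo p W n s := by
  classical
  set E : Set (A n × B n) := {z | infoDensRate p W n s z ≤ R} with hE
  set r : A n × B n → ℝ := fun z => (p n z.1).toReal * (W n s z.1 z.2).toReal with hr
  have hn0 : (0:ℝ) < n := by exact_mod_cast hn
  have key : ∀ z : A n × B n,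
      (r z - E.indicator r z) * ((n:ℝ)*R)
        - (p n z.1).toReal * (outDist p W n s z.2).toReal / Real.exp 1
      ≤ r z * Real.log ((W n s z.1 z.2).toReal / (outDist p W n s z.2).toReal) := by
    intro z
    simp only [hr]
    have hlb := aux_lb_pointwise (p n z.1).toReal (W n s z.1 z.2).toReal
      (outDist p W n s z.2).toReal ENNReal.toReal_nonneg ENNReal.toReal_nonneg
      ENNReal.toReal_nonneg (aux_aw_le_q p W n s z.1 z.2)
    by_cases hz : z ∈ E
    · rw [Set.indicator_of_mem hz]
      rw [neg_div] at hlb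
      simp only [sub_self, zero_mul]
      linarith
    · rw [Set.indicator_of_notMem hz]
      have hz' : R < infoDensRate p W n s z := lt_of_not_ge hz
      rw [infoDensRate] at hz'
      have hL : (n:ℝ)*R ≤ Real.log ((W n s z.1 z.2).toReal / (outDist p W n s z.2).toReal) := by
        have h2 := (mul_lt_mul_iff_right₀ hn0).mpr hz'
        rw [← mul_assoc, mul_one_div_cancel (ne_of_gt hn0), one_mul] at h2
        exact le_of_lt h2
      have h5 : (p n z.1).toReal * (W n s z.1 z.2).toReal * ((n:ℝ)*R)
          ≤ (p n z.1).toReal * (W n s z.1 z.2).toReal *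
            Real.log ((W n s z.1 z.2).toReal / (outDist p W n s z.2).toReal) :=
        mul_le_mul_of_nonneg_left hL (by positivity)
      have h6 : (0:ℝ) ≤ (p n z.1).toReal * (outDist p W n s z.2).toReal / Real.exp 1 := by positivity
      simp only [sub_zero]
      linarith
  have hsum := Finset.sum_le_sum (fun z (_ : z ∈ Finset.univ) => key z)
  rw [aux_mut_eq]
  refine le_trans ?_ hsum
  rw [Finset.sum_sub_distrib, ← Finset.sum_mul, Finset.sum_sub_distrib, ← Finset.sum_div,
    aux_sum_aq_one p W n s, aux_sum_r_one p W n s]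
  have hD : ∑ z : A n × B n, E.indicator r z = (probEvent p W n s E).toReal :=
    (aux_probEvent_toReal p W n s E).symm
  have hD0 : (0:ℝ) ≤ ∑ z : A n × B n, E.indicator r z :=
    Finset.sum_nonneg fun z _ => Set.indicator_nonneg (fun z _ => by positivity) z
  set D := ∑ z : A n × B n, E.indicator r z
  rw [← hD]
  have h3 : D*((n:ℝ)*R) ≤ D*((n:ℝ)*|R|) :=
    mul_le_mul_of_nonneg_left (mul_le_mul_of_nonneg_left (le_abs_self R) hn0.le) hD0
  nlinarith [h3]

lemma aux_mut_global_ub (m : ℝ) :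
    mutualInfo p W n s ≤ m + (Fintype.card (A n) : ℝ) * (Real.exp (-m) / Real.exp 1) := by
  rw [aux_mut_eq]
  have key : ∀ z : A n × B n,
      ((p n z.1).toReal * (W n s z.1 z.2).toReal) *
          Real.log ((W n s z.1 z.2).toReal / (outDist p W n s z.2).toReal)
        ≤ ((p n z.1).toReal * (W n s z.1 z.2).toReal) * m
          + (W n s z.1 z.2).toReal * (Real.exp (-m) / Real.exp 1) := fun z =>
    aux_ub_pointwise _ _ _ m ENNReal.toReal_nonneg ENNReal.toReal_nonneg
      ENNReal.toReal_nonneg (aux_aw_le_q p W n s z.1 z.2)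
  refine le_trans (Finset.sum_le_sum fun z _ => key z) ?_
  rw [Finset.sum_add_distrib, ← Finset.sum_mul, ← Finset.sum_mul, aux_sum_r_one p W n s,
    aux_sum_w_card W n s, one_mul]

lemma aux_mut_global_lb : -(1/Real.exp 1) ≤ mutualInfo p W n s := by
  rw [aux_mut_eq]
  have key : ∀ z : A n × B n,
      -((p n z.1).toReal * (outDist p W n s z.2).toReal) / Real.exp 1
        ≤ ((p n z.1).toReal * (W n s z.1 z.2).toReal) *
            Real.log ((W n s z.1 z.2).toReal / (outDist p W n s z.2).toReal) := fun z =>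
    aux_lb_pointwise _ _ _ ENNReal.toReal_nonneg ENNReal.toReal_nonneg
      ENNReal.toReal_nonneg (aux_aw_le_q p W n s z.1 z.2)
  refine le_trans ?_ (Finset.sum_le_sum fun z _ => key z)
  rw [← Finset.sum_div, Finset.sum_neg_distrib, aux_sum_aq_one p W n s, neg_div]

/-- with per-symbol alphabets `A_n = 𝒳ⁿ`, `B_n = 𝒴ⁿ` and `cinf I(X;Y)`,
`csup I(X;Y)` finite, one has
`cinf I(X;Y) ≤ liminf_n inf_s (1/n)·I(Xⁿ;Yⁿ|s) ≤ limsup_n sup_s (1/n)·I(Xⁿ;Yⁿ|s) ≤ csup I(X;Y)`. -/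
theorem cinf_liminf_limsup_csup_chain {S : Type*} [Nonempty S]
    {𝒳 𝒴 : Type*} [Fintype 𝒳] [Nonempty 𝒳] [Fintype 𝒴] [Nonempty 𝒴]
    (p : ∀ n : ℕ, PMF (Fin n → 𝒳)) (W : ∀ n : ℕ, S → (Fin n → 𝒳) → PMF (Fin n → 𝒴))
    (hfin₁ : (cinfISet p W).Nonempty) (hfin₂ : BddAbove (cinfISet p W))
    (hfin₃ : (csupISet p W).Nonempty) (hfin₄ : BddBelow (csupISet p W)) :
    cinfI p W ≤
        Filter.liminf (fun n : ℕ => ⨅ s : S, (1 / (n : ℝ)) * mutualInfo p W n s) atTop ∧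
      Filter.liminf (fun n : ℕ => ⨅ s : S, (1 / (n : ℝ)) * mutualInfo p W n s) atTop ≤
        Filter.limsup (fun n : ℕ => ⨆ s : S, (1 / (n : ℝ)) * mutualInfo p W n s) atTop ∧
      Filter.limsup (fun n : ℕ => ⨆ s : S, (1 / (n : ℝ)) * mutualInfo p W n s) atTop ≤
        csupI p W := by
  classical
  obtain ⟨s₀⟩ := (inferInstance : Nonempty S)
  obtain ⟨f, hf⟩ : ∃ f : ℕ → ℝ,
      f = fun n : ℕ => ⨅ s : S, (1 / (n : ℝ)) * mutualInfo p W n s := ⟨_, rfl⟩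
  obtain ⟨g, hg⟩ : ∃ g : ℕ → ℝ,
      g = fun n : ℕ => ⨆ s : S, (1 / (n : ℝ)) * mutualInfo p W n s := ⟨_, rfl⟩
  rw [← hf, ← hg]
  have hK1 : (1:ℝ) ≤ (Fintype.card 𝒳 : ℝ) := by exact_mod_cast Fintype.card_pos
  obtain ⟨c, hc⟩ : ∃ c : ℝ, c = Real.log (Fintype.card 𝒳) + 1 := ⟨_, rfl⟩
  have hc1 : 1 ≤ c := by have := Real.log_nonneg hK1; linarith
  have he0 : (0:ℝ) < Real.exp 1 := Real.exp_pos 1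
  have he1 : (1:ℝ) ≤ Real.exp 1 := by linarith [Real.add_one_le_exp 1]
  have hcard : ∀ n : ℕ, (Fintype.card (Fin n → 𝒳) : ℝ) * Real.exp (-(c*(n:ℝ)))
      = Real.exp (-(n:ℝ)) := by
    intro n
    have hK0 : (0:ℝ) < (Fintype.card 𝒳 : ℝ) := by linarith
    have h1 : (Fintype.card (Fin n → 𝒳) : ℝ) = (Fintype.card 𝒳 : ℝ)^n := by
      rw [Fintype.card_fun]; push_cast; simp
    have h2 : ((Fintype.card 𝒳 : ℝ))^n = Real.exp ((n:ℝ) * Real.log (Fintype.card 𝒳)) := by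
      rw [Real.exp_nat_mul, Real.exp_log hK0]
    rw [h1, h2, ← Real.exp_add]
    congr 1; rw [hc]; ring
  have hub : ∀ (n : ℕ) (s : S), (1/(n:ℝ)) * mutualInfo p W n s ≤ c + 1 := by
    intro n s
    rcases Nat.eq_zero_or_pos n with h0 | h1
    · subst h0; norm_num; linarith
    · have hn' : (1:ℝ) ≤ (n:ℝ) := by exact_mod_cast h1
      have hn0 : (0:ℝ) < (n:ℝ) := by linarith
      have h2 := aux_mut_global_ub p W n s (c * n)
      have h3 : (Fintype.card (Fin n → 𝒳) : ℝ) * (Real.exp (-(c*(n:ℝ))) / Real.exp 1)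
          = Real.exp (-(n:ℝ))/Real.exp 1 := by rw [← mul_div_assoc, hcard n]
      have h4 : Real.exp (-(n:ℝ))/Real.exp 1 ≤ 1 := by
        rw [div_le_one he0]
        calc Real.exp (-(n:ℝ)) ≤ 1 := Real.exp_le_one_iff.mpr (by linarith)
          _ ≤ Real.exp 1 := he1
      have h5 : mutualInfo p W n s ≤ c*n + 1 := by rw [h3] at h2; linarith
      have h6 := mul_le_mul_of_nonneg_left h5 (by positivity : (0:ℝ) ≤ 1/(n:ℝ))
      have h7 : (1/(n:ℝ)) * (c*(n:ℝ) + 1) ≤ c + 1 := by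
        rw [one_div, inv_mul_le_iff₀ hn0]; nlinarith
      linarith
  have hlb : ∀ (n : ℕ) (s : S), -(1/Real.exp 1) ≤ (1/(n:ℝ)) * mutualInfo p W n s := by
    intro n s
    rcases Nat.eq_zero_or_pos n with h0 | h1
    · subst h0; norm_num; positivity
    · have hn' : (1:ℝ) ≤ (n:ℝ) := by exact_mod_cast h1
      have hn0 : (0:ℝ) < (n:ℝ) := by linarith
      have h2 := aux_mut_global_lb p W n s
      have h6 := mul_le_mul_of_nonneg_left h2 (by positivity : (0:ℝ) ≤ 1/(n:ℝ))
      have h7 : -(1/Real.exp 1) ≤ (1/(n:ℝ)) * -(1/Real.exp 1) := by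
        rw [mul_neg, neg_le_neg_iff]
        rw [one_div (n:ℝ), inv_mul_le_iff₀ hn0]
        nlinarith [mul_nonneg (by linarith : (0:ℝ) ≤ (n:ℝ)-1)
          (by positivity : (0:ℝ) ≤ 1/Real.exp 1)]
      linarith
  have hBddB : ∀ n : ℕ, BddBelow (Set.range fun s : S => (1/(n:ℝ)) * mutualInfo p W n s) :=
    fun n => ⟨-(1/Real.exp 1), by rintro x ⟨s, rfl⟩; exact hlb n s⟩
  have hBddA : ∀ n : ℕ, BddAbove (Set.range fun s : S => (1/(n:ℝ)) * mutualInfo p W n s) :=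
    fun n => ⟨c+1, by rintro x ⟨s, rfl⟩; exact hub n s⟩
  have hflb : ∀ n, -(1/Real.exp 1) ≤ f n := fun n => by
    rw [hf]; exact le_ciInf (hlb n)
  have hfub : ∀ n, f n ≤ c+1 := fun n => by
    rw [hf]; exact le_trans (ciInf_le (hBddB n) s₀) (hub n s₀)
  have hgub : ∀ n, g n ≤ c+1 := fun n => by
    rw [hg]; exact ciSup_le (hub n)
  have hglb : ∀ n, -(1/Real.exp 1) ≤ g n := fun n => by
    rw [hg]; exact le_trans (hlb n s₀) (le_ciSup (hBddA n) s₀)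
  have hfg : ∀ n, f n ≤ g n := fun n => by
    rw [hf, hg]; exact le_trans (ciInf_le (hBddB n) s₀) (le_ciSup (hBddA n) s₀)
  have hBfle : IsBoundedUnder (· ≤ ·) atTop f := isBoundedUnder_of ⟨c+1, hfub⟩
  have hBfge : IsBoundedUnder (· ≥ ·) atTop f := isBoundedUnder_of ⟨-(1/Real.exp 1), hflb⟩
  have hBgle : IsBoundedUnder (· ≤ ·) atTop g := isBoundedUnder_of ⟨c+1, hgub⟩
  have hBgge : IsBoundedUnder (· ≥ ·) atTop g := isBoundedUnder_of ⟨-(1/Real.exp 1), hglb⟩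
  refine ⟨?_, ?_, ?_⟩
  · apply csSup_le hfin₁
    intro R hR
    simp only [cinfISet, Set.mem_setOf_eq] at hR
    obtain ⟨D, hDdef⟩ : ∃ D : ℕ → ℝ≥0∞,
        D = fun n => ⨆ s : S, probEvent p W n s {z | infoDensRate p W n s z ≤ R} := ⟨_, rfl⟩
    have hDtop : ∀ n, D n ≠ ⊤ := fun n => by
      rw [hDdef]
      exact ne_top_of_le_ne_top ENNReal.one_ne_top
        (iSup_le fun s => aux_probEvent_le_one p W n s _)
    obtain ⟨δ, hδdef⟩ : ∃ δ : ℕ → ℝ, δ = fun n => (D n).toReal := ⟨_, rfl⟩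
    have hδ : Tendsto δ atTop (nhds 0) := by
      rw [hδdef, hDdef]
      have h2 := (ENNReal.tendsto_toReal (ENNReal.zero_ne_top)).comp hR
      simpa [Function.comp_def] using h2
    have hcomp : ∀ᶠ n in atTop, R - |R| * δ n - 1/(n:ℝ) ≤ f n := by
      filter_upwards [eventually_ge_atTop 1] with n hn
      rw [hf]
      refine le_ciInf fun s => ?_
      have h1 := aux_mut_ge p W n s hn R
      have hδs : (probEvent p W n s {z | infoDensRate p W n s z ≤ R}).toReal ≤ δ n := by
        rw [hδdef]
        refine ENNReal.toReal_mono (hDtop n) ?_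
        rw [hDdef]
        exact le_iSup (fun s => probEvent p W n s {z | infoDensRate p W n s z ≤ R}) s
      have hn0 : (0:ℝ) < (n:ℝ) := by exact_mod_cast hn
      have hn' : (1:ℝ) ≤ (n:ℝ) := by exact_mod_cast hn
      have h2 : (n:ℝ)*R - (n:ℝ)*|R| * δ n - 1/Real.exp 1 ≤ mutualInfo p W n s := by
        refine le_trans ?_ h1
        have h3 := mul_le_mul_of_nonneg_left hδs
          (by positivity : (0:ℝ) ≤ (n:ℝ)*|R|)
        linarith
      have h6 := mul_le_mul_of_nonneg_left h2 (by positivity : (0:ℝ) ≤ 1/(n:ℝ))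
      refine le_trans ?_ h6
      have hexp : (1/(n:ℝ)) * ((n:ℝ)*R - (n:ℝ)*|R| * δ n - 1/Real.exp 1)
          = R - |R| * δ n - 1/((n:ℝ)*Real.exp 1) := by
        field_simp
      rw [hexp]
      have h8 : 1/((n:ℝ)*Real.exp 1) ≤ 1/(n:ℝ) := by
        apply one_div_le_one_div_of_le hn0; nlinarith
      linarith
    have hgg : Tendsto (fun n : ℕ => R - |R| * δ n - 1/(n:ℝ)) atTop (nhds R) := by
      have h3 : Tendsto (fun n : ℕ => R - |R| * δ n - 1/(n:ℝ)) atTop (nhds (R - |R| * 0 - 0)) :=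
        (tendsto_const_nhds.sub (tendsto_const_nhds.mul hδ)).sub
          tendsto_one_div_atTop_nhds_zero_nat
      simpa using h3
    calc R = liminf (fun n : ℕ => R - |R| * δ n - 1/(n:ℝ)) atTop := (hgg.liminf_eq).symm
      _ ≤ liminf f atTop :=
        liminf_le_liminf hcomp hgg.isBoundedUnder_ge hBfle.isCoboundedUnder_ge
  · exact le_trans (liminf_le_limsup hBfle hBfge)
      (limsup_le_limsup (Eventually.of_forall hfg) hBfge.isCoboundedUnder_le hBgle)
  · apply le_csInf hfin₃
    intro R hR
    simp only [csupISet, Set.mem_setOf_eq] at hR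
    obtain ⟨D, hDdef⟩ : ∃ D : ℕ → ℝ≥0∞,
        D = fun n => ⨆ s : S, probEvent p W n s {z | R ≤ infoDensRate p W n s z} := ⟨_, rfl⟩
    have hDtop : ∀ n, D n ≠ ⊤ := fun n => by
      rw [hDdef]
      exact ne_top_of_le_ne_top ENNReal.one_ne_top
        (iSup_le fun s => aux_probEvent_le_one p W n s _)
    obtain ⟨δ, hδdef⟩ : ∃ δ : ℕ → ℝ, δ = fun n => (D n).toReal := ⟨_, rfl⟩
    have hδ : Tendsto δ atTop (nhds 0) := by
      rw [hδdef, hDdef]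
      have h2 := (ENNReal.tendsto_toReal (ENNReal.zero_ne_top)).comp hR
      simpa [Function.comp_def] using h2
    have hδ0 : ∀ n, 0 ≤ δ n := fun n => by rw [hδdef]; exact ENNReal.toReal_nonneg
    have hcomp : ∀ᶠ n in atTop, g n ≤ R + (|R| + c) * δ n + Real.exp (-(n:ℝ)) := by
      filter_upwards [eventually_ge_atTop 1] with n hn
      rw [hg]
      refine ciSup_le fun s => ?_
      have hn0 : (0:ℝ) < (n:ℝ) := by exact_mod_cast hn
      have hn' : (1:ℝ) ≤ (n:ℝ) := by exact_mod_cast hn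
      have h1 := aux_mut_le p W n s hn R (c*(n:ℝ))
      have h3 : (Fintype.card (Fin n → 𝒳) : ℝ) * (Real.exp (-(c*(n:ℝ))) / Real.exp 1)
          = Real.exp (-(n:ℝ))/Real.exp 1 := by rw [← mul_div_assoc, hcard n]
      have hδs : (probEvent p W n s {z | R ≤ infoDensRate p W n s z}).toReal ≤ δ n := by
        rw [hδdef]
        refine ENNReal.toReal_mono (hDtop n) ?_
        rw [hDdef]
        exact le_iSup (fun s => probEvent p W n s {z | R ≤ infoDensRate p W n s z}) s
      have hcoef : (0:ℝ) ≤ (n:ℝ)*|R| + c*(n:ℝ) := by positivity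
      have h2 : mutualInfo p W n s
          ≤ (n:ℝ)*R + ((n:ℝ)*|R| + c*(n:ℝ)) * δ n + Real.exp (-(n:ℝ))/Real.exp 1 := by
        rw [h3] at h1
        have h4 := mul_le_mul_of_nonneg_left hδs hcoef
        linarith
      have h6 := mul_le_mul_of_nonneg_left h2 (by positivity : (0:ℝ) ≤ 1/(n:ℝ))
      refine le_trans h6 ?_
      have hexp : (1/(n:ℝ)) * ((n:ℝ)*R + ((n:ℝ)*|R| + c*(n:ℝ)) * δ n + Real.exp (-(n:ℝ))/Real.exp 1)
          = R + (|R| + c) * δ n + Real.exp (-(n:ℝ))/((n:ℝ)*Real.exp 1) := by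
        field_simp
      rw [hexp]
      have h8 : Real.exp (-(n:ℝ))/((n:ℝ)*Real.exp 1) ≤ Real.exp (-(n:ℝ)) := by
        apply div_le_self (Real.exp_pos _).le; nlinarith
      linarith
    have hgg : Tendsto (fun n : ℕ => R + (|R| + c) * δ n + Real.exp (-(n:ℝ))) atTop (nhds R) := by
      have hexpn : Tendsto (fun n : ℕ => Real.exp (-(n:ℝ))) atTop (nhds 0) :=
        Real.tendsto_exp_neg_atTop_nhds_zero.comp tendsto_natCast_atTop_atTop
      have h3 : Tendsto (fun n : ℕ => R + (|R| + c) * δ n + Real.exp (-(n:ℝ))) atTop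
          (nhds (R + (|R| + c) * 0 + 0)) :=
        (tendsto_const_nhds.add (tendsto_const_nhds.mul hδ)).add hexpn
      simpa using h3
    calc limsup g atTop ≤ limsup (fun n : ℕ => R + (|R| + c) * δ n + Real.exp (-(n:ℝ))) atTop :=
        limsup_le_limsup hcomp hBgge.isCoboundedUnder_le hgg.isBoundedUnder_le
      _ = R := hgg.limsup_eq

end
end
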